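/- arXiv:0911.0668 — 4 statements merged into one kernel-verified Lean document; each statement's English description precedes it below -/
import Mathlib

section
/- Let v : ℂ → ℂⁿ be a C¹ map with compact support contained in D and with ‖v(z)‖ ≤ 1 for all z. Let w : D → ℂⁿ be a measurable function satisfying ‖w(z)‖ ≤ (1/10)·‖v(z)‖^{1/2}·min(‖∂v/∂z(z)‖, 1) for all z ∈ D. Then for every τ ≥ 1, ∫_D ‖∂v/∂z̄(z) − w(z)‖² e^{τφ} dA ≥ (τ/80) ∫_D ‖v‖² e^{τφ} dA, where dA is Lebesgue measure on ℂ. -/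
open Complex MeasureTheory Metric Filter Asymptotics Topology

/-- The Wirtinger derivative `∂u/∂z̄ = (1/2)(∂u/∂x + i • ∂u/∂y)`. -/
noncomputable def dbar {E : Type*} [NormedAddCommGroup E] [NormedSpace ℂ E]
    (u : ℂ → E) (z : ℂ) : E :=
  (2⁻¹ : ℝ) • (fderiv ℝ u z 1 + Complex.I • fderiv ℝ u z Complex.I)

/-- The Wirtinger derivative `∂u/∂z = (1/2)(∂u/∂x - i • ∂u/∂y)`. -/
noncomputable def dz {E : Type*} [NormedAddCommGroup E] [NormedSpace ℂ E]
    (u : ℂ → E) (z : ℂ) : E :=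
  (2⁻¹ : ℝ) • (fderiv ℝ u z 1 - Complex.I • fderiv ℝ u z Complex.I)

/-- The weight `φ(x+iy) = x + x²/2`. -/
noncomputable def phi (z : ℂ) : ℝ := z.re + z.re ^ 2 / 2

set_option maxHeartbeats 2000000
set_option synthInstance.maxHeartbeats 400000

open ContinuousLinearMap
open scoped Convolution Pointwise

section Aux

variable {F : Type*} [NormedAddCommGroup F] [NormedSpace ℝ F]

/-- The integral of a directional derivative of a compactly supported `C¹` scalar function
vanishes. -/
lemma integral_fderiv_apply_eq_zero {g : ℂ → ℝ} (hg : ContDiff ℝ 1 g)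
    (hc : HasCompactSupport g) (d : ℂ) : ∫ z, fderiv ℝ g z d = 0 := by
  have hg' : Continuous fun z => fderiv ℝ g z d :=
    (hg.continuous_fderiv one_ne_zero).clm_apply continuous_const
  have hcs' : HasCompactSupport fun z => fderiv ℝ g z d :=
    (hc.fderiv ℝ).comp_left (g := fun L : ℂ →L[ℝ] ℝ => L d) rfl
  have int1 : Integrable (fun z => (1 : ℝ) * fderiv ℝ g z d) := by
    simpa using hg'.integrable_of_hasCompactSupport hcs'
  have int2 : Integrable (fun z : ℂ => fderiv ℝ (fun _ : ℂ => (1 : ℝ)) z d * g z) := by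
    simpa [fderiv_const] using (integrable_zero ℂ ℝ (volume : Measure ℂ))
  have int3 : Integrable (fun z : ℂ => (1 : ℝ) * g z) := by
    simpa using hg.continuous.integrable_of_hasCompactSupport hc
  have h1 := integral_mul_fderiv_eq_neg_fderiv_mul_of_integrable int2 int1 int3
    (fun x _ => differentiable_const (1 : ℝ) x) (fun x _ => hg.differentiable one_ne_zero x)
  simpa [fderiv_const] using h1

/-- `C²` case of the key "null Lagrangian" identity. -/
lemma integral_bil_fderiv_eq_zero_of_contDiffTwo (B : F →L[ℝ] F →L[ℝ] ℝ)
    (hB : ∀ x y, B x y = - B y x) {u : ℂ → F} (hu : ContDiff ℝ 2 u)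
    (hc : HasCompactSupport u) :
    ∫ z, B (fderiv ℝ u z 1) (fderiv ℝ u z Complex.I) = 0 := by
  have hdu : ContDiff ℝ 1 (fderiv ℝ u) := hu.fderiv_right (by norm_num)
  have hcu' : HasCompactSupport (fderiv ℝ u) := hc.fderiv ℝ
  have cont_du : Continuous (fderiv ℝ u) := hdu.continuous
  have cont_d : ∀ d : ℂ, Continuous fun z => fderiv ℝ u z d := fun d =>
    cont_du.clm_apply continuous_const
  have hgd_cd : ∀ d : ℂ, ContDiff ℝ 1 fun z => fderiv ℝ u z d := fun d =>
    (ContinuousLinearMap.apply ℝ F d).contDiff.comp hdu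
  -- integrability helper
  have hint : ∀ (f g : ℂ → F), (∀ x ∉ tsupport u, f x = 0) → Continuous f → Continuous g →
      Integrable (fun x => B (f x) (g x)) := by
    intro f g hf0 hf hg
    refine ((B.continuous.comp hf).clm_apply hg).integrable_of_hasCompactSupport
      (HasCompactSupport.intro hc ?_)
    intro x hx
    simp [hf0 x hx]
  have hvan : ∀ (d : ℂ), ∀ x ∉ tsupport u, fderiv ℝ u x d = 0 := by
    intro d x hx
    have : fderiv ℝ u x = 0 := by
      by_contra h
      exact hx (support_fderiv_subset ℝ (show x ∈ Function.support (fderiv ℝ u) from h))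
    simp [this]
  have hvanu : ∀ x ∉ tsupport u, u x = 0 := fun x hx => image_eq_zero_of_notMem_tsupport hx
  have hdiff : Differentiable ℝ u := hu.differentiable two_ne_zero
  -- second derivative and its symmetry
  have hf2 : ∀ z : ℂ, HasFDerivAt (fderiv ℝ u) (fderiv ℝ (fderiv ℝ u) z) z := fun z =>
    ((hdu.differentiable one_ne_zero) z).hasFDerivAt
  have hsym : ∀ z : ℂ, fderiv ℝ (fderiv ℝ u) z 1 Complex.I
      = fderiv ℝ (fderiv ℝ u) z Complex.I 1 := fun z =>
    second_derivative_symmetric (fun y => (hdiff y).hasFDerivAt) (hf2 z) 1 Complex.I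
  -- derivative of z ↦ fderiv u z d
  have hgd : ∀ (d : ℂ) (z : ℂ), HasFDerivAt (fun z => fderiv ℝ u z d)
      ((ContinuousLinearMap.apply ℝ F d).comp (fderiv ℝ (fderiv ℝ u) z)) z := fun d z =>
    (ContinuousLinearMap.apply ℝ F d).hasFDerivAt.comp z (hf2 z)
  have hgd' : ∀ (d e : ℂ) (z : ℂ), fderiv ℝ (fun z => fderiv ℝ u z d) z e
      = fderiv ℝ (fderiv ℝ u) z e d := by
    intro d e z
    rw [(hgd d z).fderiv]
    simp
  have contgd' : ∀ d e : ℂ, Continuous fun z => fderiv ℝ (fun z => fderiv ℝ u z d) z e :=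
    fun d e => ((hgd_cd d).continuous_fderiv one_ne_zero).clm_apply continuous_const
  -- the two integrations by parts
  have IBP1 := integral_bilinear_fderiv_right_eq_neg_left_of_integrable
    (f := u) (g := fun z => fderiv ℝ u z Complex.I) (v := 1) (B := B)
    (hint _ _ (hvan 1) (cont_d 1) (cont_d Complex.I))
    (hint _ _ hvanu hu.continuous (contgd' Complex.I 1))
    (hint _ _ hvanu hu.continuous (cont_d Complex.I))
    (fun x _ => hdiff x) (fun x _ => (hgd_cd Complex.I).differentiable one_ne_zero x)
  have IBP2 := integral_bilinear_fderiv_right_eq_neg_left_of_integrable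
    (f := u) (g := fun z => fderiv ℝ u z 1) (v := Complex.I) (B := B)
    (hint _ _ (hvan Complex.I) (cont_d Complex.I) (cont_d 1))
    (hint _ _ hvanu hu.continuous (contgd' 1 Complex.I))
    (hint _ _ hvanu hu.continuous (cont_d 1))
    (fun x _ => hdiff x) (fun x _ => (hgd_cd 1).differentiable one_ne_zero x)
  have heq : (fun z => B (u z) (fderiv ℝ (fun z => fderiv ℝ u z Complex.I) z 1))
      = fun z => B (u z) (fderiv ℝ (fun z => fderiv ℝ u z 1) z Complex.I) := by
    funext z
    rw [hgd' Complex.I 1 z, hgd' 1 Complex.I z, hsym z]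
  rw [heq, IBP2] at IBP1
  have hBneg : ∫ z, B (fderiv ℝ u z Complex.I) (fderiv ℝ u z 1)
      = - ∫ z, B (fderiv ℝ u z 1) (fderiv ℝ u z Complex.I) := by
    rw [← integral_neg]
    congr 1
    funext z
    rw [hB]
  rw [hBneg] at IBP1
  linarith

/-- `C¹` case, by mollification. -/
lemma integral_bil_fderiv_eq_zero [CompleteSpace F] (B : F →L[ℝ] F →L[ℝ] ℝ)
    (hB : ∀ x y, B x y = - B y x) {u : ℂ → F} (hu : ContDiff ℝ 1 u)
    (hc : HasCompactSupport u) :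
    ∫ z, B (fderiv ℝ u z 1) (fderiv ℝ u z Complex.I) = 0 := by
  classical
  -- mollifiers
  set φ : ℕ → ContDiffBump (0 : ℂ) := fun i =>
    { rIn := ((i : ℝ) + 1)⁻¹ / 2
      rOut := ((i : ℝ) + 1)⁻¹
      rIn_pos := by positivity
      rIn_lt_rOut := by
        have : (0 : ℝ) < ((i : ℝ) + 1)⁻¹ := by positivity
        linarith } with hφdef
  have hφout : Filter.Tendsto (fun i => (φ i).rOut) atTop (𝓝 0) := by
    simpa [hφdef, one_div] using tendsto_one_div_add_atTop_nhds_zero_nat (𝕜 := ℝ)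
  have hφle : ∀ i, (φ i).rOut ≤ 1 := by
    intro i
    simp only [hφdef]
    rw [inv_le_one_iff₀]
    right; push_cast; linarith [Nat.cast_nonneg (α := ℝ) i]
  set k : ℕ → ℂ → ℝ := fun i => (φ i).normed (volume : Measure ℂ) with hkdef
  set U : ℕ → ℂ → F := fun i => (k i) ⋆[(ContinuousLinearMap.lsmul ℝ ℝ : ℝ →L[ℝ] F →L[ℝ] F), volume] u with hUdef
  have hloc : MeasureTheory.LocallyIntegrable u (volume : Measure ℂ) :=
    hu.continuous.locallyIntegrable
  have hU2 : ∀ i, ContDiff ℝ 2 (U i) := fun i =>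
    (φ i).hasCompactSupport_normed.contDiff_convolution_left _ (φ i).contDiff_normed hloc
  -- uniform compact support
  set K : Set ℂ := Metric.closedBall (0 : ℂ) 1 + tsupport u with hKdef
  have hK : IsCompact K := (isCompact_closedBall _ _).add hc
  have hsuppU : ∀ i, tsupport (U i) ⊆ K := by
    intro i
    apply closure_minimal _ hK.isClosed
    refine (support_convolution_subset (ContinuousLinearMap.lsmul ℝ ℝ : ℝ →L[ℝ] F →L[ℝ] F)).trans ?_
    apply Set.add_subset_add
    · rw [hkdef]
      simp only []
      rw [(φ i).support_normed_eq]
      exact (Metric.ball_subset_closedBall).trans (Metric.closedBall_subset_closedBall (hφle i))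
    · exact subset_tsupport u
  have hUc : ∀ i, HasCompactSupport (U i) := fun i =>
    HasCompactSupport.of_support_subset_isCompact hK ((subset_tsupport _).trans (hsuppU i))
  -- each smooth integral vanishes
  have hzero : ∀ i, ∫ z, B (fderiv ℝ (U i) z 1) (fderiv ℝ (U i) z Complex.I) = 0 := fun i =>
    integral_bil_fderiv_eq_zero_of_contDiffTwo B hB (hU2 i) (hUc i)
  -- derivative of the convolution
  have hUderiv : ∀ i (z : ℂ) (d : ℂ), fderiv ℝ (U i) z d
      = ((k i) ⋆[(ContinuousLinearMap.lsmul ℝ ℝ : ℝ →L[ℝ] F →L[ℝ] F), volume] (fun a => fderiv ℝ u a d)) z := by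
    intro i z d
    have h1 := hc.hasFDerivAt_convolution_right (ContinuousLinearMap.lsmul ℝ ℝ : ℝ →L[ℝ] F →L[ℝ] F)
      (((φ i).integrable_normed (μ := (volume : Measure ℂ))).locallyIntegrable) hu z
    rw [h1.fderiv]
    exact convolution_precompR_apply _ (((φ i).integrable_normed (μ := (volume : Measure ℂ))).locallyIntegrable)
      (hc.fderiv ℝ) (hu.continuous_fderiv one_ne_zero) z d
  -- uniform bounds on derivatives
  have contd : ∀ d : ℂ, Continuous fun z => fderiv ℝ u z d := fun d =>
    (hu.continuous_fderiv one_ne_zero).clm_apply continuous_const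
  have hcsd : ∀ d : ℂ, HasCompactSupport fun z => fderiv ℝ u z d := fun d =>
    (hc.fderiv ℝ).comp_left (g := fun L : ℂ →L[ℝ] F => L d) rfl
  have hMd : ∀ d : ℂ, ∃ M : ℝ, (0 ≤ M) ∧ (∀ z, ‖fderiv ℝ u z d‖ ≤ M) ∧
      ∀ i z, ‖fderiv ℝ (U i) z d‖ ≤ M := by
    intro d
    obtain ⟨M, hM⟩ := (contd d).bounded_above_of_compact_support (hcsd d)
    have hM0 : 0 ≤ M := le_trans (norm_nonneg _) (hM 0)
    refine ⟨M, hM0, hM, ?_⟩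
    intro i z
    rw [hUderiv i z d]
    have := dist_convolution_le (f := k i) (z₀ := (0 : F)) (x₀ := z)
      (g := fun a => fderiv ℝ u a d) hM0 ((φ i).support_normed_eq.subset)
      (φ i).nonneg_normed (φ i).integral_normed (contd d).aestronglyMeasurable
      (fun x _ => by simpa [dist_eq_norm] using hM x)
    simpa [dist_eq_norm] using this
  obtain ⟨M1, hM10, hM1u, hM1U⟩ := hMd 1
  obtain ⟨MI, hMI0, hMIu, hMIU⟩ := hMd Complex.I
  -- dominated convergence
  set bound : ℂ → ℝ := K.indicator (fun _ => ‖B‖ * M1 * MI) with hbdef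
  have hBcont : Continuous fun p : F × F => B p.1 p.2 := B.isBoundedBilinearMap.continuous
  have hFmeas : ∀ i, MeasureTheory.AEStronglyMeasurable
      (fun z => B (fderiv ℝ (U i) z 1) (fderiv ℝ (U i) z Complex.I)) (volume : Measure ℂ) := by
    intro i
    have c1 : Continuous fun z => fderiv ℝ (U i) z (1 : ℂ) :=
      (((hU2 i).continuous_fderiv (by norm_num))).clm_apply continuous_const
    have cI : Continuous fun z => fderiv ℝ (U i) z Complex.I :=
      (((hU2 i).continuous_fderiv (by norm_num))).clm_apply continuous_const
    exact ((B.continuous.comp c1).clm_apply cI).aestronglyMeasurable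
  have hbound : ∀ i, ∀ᵐ z ∂(volume : Measure ℂ),
      ‖B (fderiv ℝ (U i) z 1) (fderiv ℝ (U i) z Complex.I)‖ ≤ bound z := by
    intro i
    filter_upwards with z
    by_cases hz : z ∈ K
    · rw [hbdef, Set.indicator_of_mem hz]
      calc ‖B (fderiv ℝ (U i) z 1) (fderiv ℝ (U i) z Complex.I)‖
          ≤ ‖B‖ * ‖fderiv ℝ (U i) z 1‖ * ‖fderiv ℝ (U i) z Complex.I‖ := B.le_opNorm₂ _ _
        _ ≤ ‖B‖ * M1 * MI := by
            gcongr
            exacts [hM1U i z, hMIU i z]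
    · have : fderiv ℝ (U i) z = 0 := by
        by_contra h
        exact hz (hsuppU i (support_fderiv_subset ℝ
          (show z ∈ Function.support (fderiv ℝ (U i)) from h)))
      rw [hbdef, Set.indicator_of_notMem hz]
      simp [this]
  have hbound_int : MeasureTheory.Integrable bound (volume : Measure ℂ) := by
    rw [hbdef, MeasureTheory.integrable_indicator_iff hK.measurableSet]
    exact MeasureTheory.integrableOn_const hK.measure_lt_top.ne
  have hlim : ∀ᵐ z ∂(volume : Measure ℂ), Filter.Tendsto
      (fun i => B (fderiv ℝ (U i) z 1) (fderiv ℝ (U i) z Complex.I)) atTop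
      (𝓝 (B (fderiv ℝ u z 1) (fderiv ℝ u z Complex.I))) := by
    filter_upwards with z
    have h1 : Filter.Tendsto (fun i => fderiv ℝ (U i) z 1) atTop (𝓝 (fderiv ℝ u z 1)) := by
      simp only [hUderiv]
      exact ContDiffBump.convolution_tendsto_right_of_continuous hφout (contd 1) z
    have hI : Filter.Tendsto (fun i => fderiv ℝ (U i) z Complex.I) atTop
        (𝓝 (fderiv ℝ u z Complex.I)) := by
      simp only [hUderiv]
      exact ContDiffBump.convolution_tendsto_right_of_continuous hφout (contd Complex.I) z
    exact (hBcont.tendsto _).comp (h1.prodMk_nhds hI)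
  have := MeasureTheory.tendsto_integral_of_dominated_convergence bound hFmeas hbound_int
    hbound hlim
  simp only [hzero] at this
  exact (tendsto_nhds_unique tendsto_const_nhds this).symm

lemma sq_bound1 (x y : F) : ‖x‖ ^ 2 / 2 - ‖y‖ ^ 2 ≤ ‖x - y‖ ^ 2 := by
  have h : ‖x‖ ≤ ‖x - y‖ + ‖y‖ := by
    simpa using norm_add_le (x - y) y
  nlinarith [norm_nonneg (x - y), norm_nonneg y, norm_nonneg x, sq_nonneg (‖x - y‖ - ‖y‖)]

lemma sq_bound2 (x y : F) : ‖x - y‖ ^ 2 ≤ 2 * ‖x‖ ^ 2 + 2 * ‖y‖ ^ 2 := by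
  have h := norm_sub_le x y
  nlinarith [norm_nonneg x, norm_nonneg y, norm_nonneg (x - y), sq_nonneg (‖x‖ - ‖y‖)]

end Aux

section Bil

variable {E : Type*} [NormedAddCommGroup E] [InnerProductSpace ℂ E] [NormedSpace ℝ E]
  [IsScalarTower ℝ ℂ E]

lemma realCoe_smul (r : ℝ) (x : E) : (r : ℂ) • x = r • x := by
  rw [show ((r : ℂ)) = r • (1 : ℂ) by simp [Complex.real_smul], smul_one_smul]

/-- The antisymmetric bilinear form `B x y = Re ⟪x, i y⟫`. -/
noncomputable def BilMap : E →L[ℝ] E →L[ℝ] ℝ :=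
  LinearMap.mkContinuous₂
    (LinearMap.mk₂ ℝ (fun x y => (inner ℂ x (Complex.I • y) : ℂ).re)
      (fun x x' y => by
        show (inner ℂ (x + x') (Complex.I • y) : ℂ).re
          = (inner ℂ x (Complex.I • y) : ℂ).re + (inner ℂ x' (Complex.I • y) : ℂ).re
        rw [inner_add_left]; simp [inner_smul_right])
      (fun r x y => by
        show (inner ℂ (r • x) (Complex.I • y) : ℂ).re = r • (inner ℂ x (Complex.I • y) : ℂ).re
        rw [← realCoe_smul r x, inner_smul_left]
        simp [Complex.conj_ofReal, inner_smul_right])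
      (fun x y y' => by
        show (inner ℂ x (Complex.I • (y + y')) : ℂ).re
          = (inner ℂ x (Complex.I • y) : ℂ).re + (inner ℂ x (Complex.I • y') : ℂ).re
        rw [smul_add, inner_add_right]; simp [inner_smul_right])
      (fun r x y => by
        show (inner ℂ x (Complex.I • r • y) : ℂ).re = r • (inner ℂ x (Complex.I • y) : ℂ).re
        rw [smul_comm, ← realCoe_smul r _, inner_smul_right]
        simp [inner_smul_right]))
    1
    (fun x y => by
      simp only [LinearMap.mk₂_apply, Real.norm_eq_abs, one_mul]
      calc |(inner ℂ x (Complex.I • y) : ℂ).re| ≤ ‖(inner ℂ x (Complex.I • y) : ℂ)‖ :=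
            Complex.abs_re_le_norm _
        _ = ‖(inner ℂ x (Complex.I • y) : ℂ)‖ := rfl
        _ ≤ ‖x‖ * ‖Complex.I • y‖ := norm_inner_le_norm _ _
        _ = ‖x‖ * ‖y‖ := by rw [norm_smul]; simp)

lemma BilMap_apply (x y : E) : BilMap x y = (inner ℂ x (Complex.I • y) : ℂ).re := rfl

lemma norm_sq_eq_re_inner' (x : E) : ‖x‖ ^ 2 = (inner ℂ x x : ℂ).re := by
  rw [← inner_self_eq_norm_sq (𝕜 := ℂ)]
  rfl

lemma BilMap_anti (x y : E) : BilMap x y = - BilMap y x := by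
  rw [BilMap_apply, BilMap_apply, inner_smul_right, inner_smul_right]
  rw [← inner_conj_symm x y]
  simp only [Complex.mul_re, Complex.mul_im, Complex.conj_re, Complex.conj_im,
    Complex.I_re, Complex.I_im]
  ring

/-- The key pointwise identity. -/
lemma vec_main (c : ℝ) (p q m : E) :
    ‖(2⁻¹ : ℝ) • (p + Complex.I • q) - c • m‖ ^ 2
      - ‖(2⁻¹ : ℝ) • (p - Complex.I • q) + c • m‖ ^ 2
      = (inner ℂ p (Complex.I • q) : ℂ).re - 2 * c * (inner ℂ p m : ℂ).re := by
  have nsq : ∀ x : E, ‖x‖ ^ 2 = (inner ℂ x x : ℂ).re := by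
    intro x
    rw [← inner_self_eq_norm_sq (𝕜 := ℂ)]
    rfl
  rw [nsq, nsq]
  simp only [← realCoe_smul]
  simp only [inner_sub_left, inner_sub_right, inner_add_left, inner_add_right,
    inner_smul_left, inner_smul_right, Complex.conj_ofReal, Complex.conj_I,
    ← inner_conj_symm p q, ← inner_conj_symm p m, ← inner_conj_symm q m]
  simp only [Complex.add_re, Complex.sub_re, Complex.mul_re, Complex.mul_im,
    Complex.conj_re, Complex.conj_im, Complex.I_re, Complex.I_im, Complex.ofReal_re,
    Complex.ofReal_im, Complex.add_im, Complex.sub_im, Complex.neg_re, Complex.neg_im,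
    inner_self_im (𝕜 := ℂ)]
  ring

end Bil

/-- Lemma 2: if `v` is `C¹`, compactly supported in the unit disc with
`‖v‖ ≤ 1`, and `w` is measurable with
`‖w(z)‖ ≤ (1/10)·‖v(z)‖^{1/2}·min(‖∂v/∂z(z)‖, 1)` on `D`, then for all `τ ≥ 1`,
`∫ ‖∂v/∂z̄ - w‖² e^{τφ} ≥ (τ/80) ∫ ‖v‖² e^{τφ}`. -/
theorem carleman_estimate_perturbed (n : ℕ) (v : ℂ → EuclideanSpace ℂ (Fin n))
    (hv : ContDiff ℝ 1 v) (hsupp : HasCompactSupport v)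
    (hsub : tsupport v ⊆ ball (0 : ℂ) 1)
    (hvbd : ∀ z, ‖v z‖ ≤ 1)
    (w : ℂ → EuclideanSpace ℂ (Fin n)) (hw : MeasureTheory.StronglyMeasurable w)
    (hwbd : ∀ z ∈ ball (0 : ℂ) 1,
      ‖w z‖ ≤ (1 / 10) * ‖v z‖ ^ ((1 : ℝ) / 2) * min ‖dz v z‖ 1)
    (τ : ℝ) (hτ : 1 ≤ τ) :
    (τ / 80) * (∫ z in ball (0 : ℂ) 1, ‖v z‖ ^ 2 * Real.exp (τ * phi z))
      ≤ ∫ z in ball (0 : ℂ) 1, ‖dbar v z - w z‖ ^ 2 * Real.exp (τ * phi z) := by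
  classical
  have hτ0 : (0 : ℝ) < τ := lt_of_lt_of_le one_pos hτ
  set ψ : ℂ → ℝ := fun z => Real.exp (τ * phi z / 2) with hψdef
  set u : ℂ → EuclideanSpace ℂ (Fin n) := fun z => ψ z • v z with hudef
  set α : ℂ → ℝ := fun z => τ * (1 + z.re) / 4 with hαdef
  have hψpos : ∀ z, 0 < ψ z := fun z => Real.exp_pos _
  have hψsq : ∀ z, ψ z ^ 2 = Real.exp (τ * phi z) := by
    intro z
    rw [hψdef]
    rw [sq, ← Real.exp_add]
    ring_nf
  -- derivative of ψ
  have hψd : ∀ z : ℂ, HasFDerivAt ψ ((ψ z * (2 * α z)) • Complex.reCLM) z := by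
    intro z
    have hre : HasFDerivAt (fun w : ℂ => w.re) Complex.reCLM z := Complex.reCLM.hasFDerivAt
    have h2 : HasFDerivAt (fun w : ℂ => τ * phi w / 2)
        ((τ / 2 * (1 + z.re)) • Complex.reCLM) z := by
      have h := ((hre.add ((hre.mul hre).const_mul (2⁻¹ : ℝ))).const_mul τ).const_mul (2⁻¹ : ℝ)
      have heq : (fun w : ℂ => τ * phi w / 2)
          = fun w : ℂ => 2⁻¹ * (τ * (w.re + 2⁻¹ * (w.re * w.re))) := by
        funext w; simp only [phi]; ring
      rw [heq]
      refine HasFDerivAt.congr_fderiv h ?_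
      ext w
      simp
      ring
    have h3 := (Real.hasDerivAt_exp (τ * phi z / 2)).comp_hasFDerivAt z h2
    have heq2 : Real.exp (τ * phi z / 2) • ((τ / 2 * (1 + z.re)) • Complex.reCLM)
        = (ψ z * (2 * α z)) • Complex.reCLM := by
      rw [smul_smul]
      congr 1
      rw [hψdef, hαdef]
      ring
    rw [heq2] at h3
    exact h3
  have hψc : ContDiff ℝ 1 ψ := by
    rw [hψdef]
    apply Real.contDiff_exp.comp
    have h : ContDiff ℝ 1 (fun w : ℂ => 2⁻¹ * (τ * (w.re + 2⁻¹ * (w.re * w.re)))) :=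
      contDiff_const.mul (contDiff_const.mul (Complex.reCLM.contDiff.add
        (contDiff_const.mul (Complex.reCLM.contDiff.mul Complex.reCLM.contDiff))))
    have heq : (fun w : ℂ => τ * phi w / 2)
        = fun w : ℂ => 2⁻¹ * (τ * (w.re + 2⁻¹ * (w.re * w.re))) := by
      funext w; simp only [phi]; ring
    rw [heq]
    exact h
  -- u is C¹ with compact support inside tsupport v
  have hvd : Differentiable ℝ v := hv.differentiable one_ne_zero
  have hu1 : ContDiff ℝ 1 u := hψc.smul hv
  have hucs : HasCompactSupport u := HasCompactSupport.smul_left (f := ψ) hsupp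
  have hud : ∀ z : ℂ, HasFDerivAt u
      (ψ z • fderiv ℝ v z + ((ψ z * (2 * α z)) • Complex.reCLM).smulRight (v z)) z :=
    fun z => (hψd z).smul (hvd z).hasFDerivAt
  have hux : ∀ z : ℂ, fderiv ℝ u z 1 = ψ z • fderiv ℝ v z 1 + (2 * α z * ψ z) • v z := by
    intro z
    rw [(hud z).fderiv]
    simp [ContinuousLinearMap.smulRight_apply]
    congr 1
    ring
  have huy : ∀ z : ℂ, fderiv ℝ u z Complex.I = ψ z • fderiv ℝ v z Complex.I := by
    intro z
    rw [(hud z).fderiv]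
    simp [ContinuousLinearMap.smulRight_apply]
  -- dbar and dz of u
  have hdbar : ∀ z : ℂ, dbar u z = ψ z • dbar v z + α z • u z := by
    intro z
    simp only [dbar, hux z, huy z]
    simp only [hudef]
    rw [smul_comm Complex.I (ψ z)]
    module
  have hdzu : ∀ z : ℂ, ψ z • dz v z = (dz u z + α z • u z) - (2 * α z) • u z := by
    intro z
    simp only [dz, hux z, huy z]
    simp only [hudef]
    rw [smul_comm Complex.I (ψ z)]
    module
  have hQdbar : ∀ z : ℂ, ψ z • dbar v z = dbar u z - α z • u z := by
    intro z
    rw [hdbar z]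
    abel
  set Q : ℂ → EuclideanSpace ℂ (Fin n) := fun z => dz u z + α z • u z with hQdef
  -- pointwise identity P1
  have P1 : ∀ z : ℂ, ‖ψ z • dbar v z‖ ^ 2 = ‖Q z‖ ^ 2
      + BilMap (fderiv ℝ u z 1) (fderiv ℝ u z Complex.I)
      - 2 * α z * (inner ℂ (fderiv ℝ u z 1) (u z) : ℂ).re := by
    intro z
    have h := vec_main (α z) (fderiv ℝ u z 1) (fderiv ℝ u z Complex.I) (u z)
    rw [hQdbar z, BilMap_apply]
    have hA : dbar u z = (2⁻¹ : ℝ) • (fderiv ℝ u z 1 + Complex.I • fderiv ℝ u z Complex.I) := rfl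
    have hB : Q z = (2⁻¹ : ℝ) • (fderiv ℝ u z 1 - Complex.I • fderiv ℝ u z Complex.I)
        + α z • u z := rfl
    rw [hA, hB]
    linarith [h]
  -- pointwise inequality P2
  have P2 : ∀ z : ℂ, ‖ψ z • dz v z‖ ^ 2 ≤ 2 * ‖Q z‖ ^ 2 + 2 * τ ^ 2 * ‖u z‖ ^ 2 := by
    intro z
    rw [hdzu z]
    have h1 := sq_bound2 (dz u z + α z • u z) ((2 * α z) • u z)
    have h2 : ‖(2 * α z) • u z‖ ^ 2 = (2 * α z) ^ 2 * ‖u z‖ ^ 2 := by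
      rw [norm_smul, Real.norm_eq_abs, mul_pow, _root_.sq_abs]
    have h3 : (2 * α z) ^ 2 * ‖u z‖ ^ 2 ≤ τ ^ 2 * ‖u z‖ ^ 2 := by
      by_cases hz : u z = 0
      · simp [hz]
      · have hzv : v z ≠ 0 := by
          intro h0
          apply hz
          rw [hudef]
          simp [h0]
        have hzball : z ∈ ball (0 : ℂ) 1 := hsub (subset_tsupport v hzv)
        have hre : |z.re| < 1 := by
          have h4 : ‖z‖ < 1 := by simpa [Complex.dist_eq] using hzball
          exact lt_of_le_of_lt (Complex.abs_re_le_norm z) h4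
        have h5 : (2 * α z) ^ 2 ≤ τ ^ 2 := by
          rw [hαdef]
          simp only []
          have h6 : -1 < z.re := by cases abs_lt.1 hre; assumption
          have h7 : z.re < 1 := by cases abs_lt.1 hre; assumption
          nlinarith [mul_pos hτ0 hτ0, mul_nonneg (mul_nonneg (mul_pos hτ0 hτ0).le
            (by linarith : (0:ℝ) ≤ 1 - z.re)) (by linarith : (0:ℝ) ≤ 3 + z.re)]
        exact mul_le_mul_of_nonneg_right h5 (sq_nonneg _)
    calc ‖(dz u z + α z • u z) - (2 * α z) • u z‖ ^ 2
        ≤ 2 * ‖dz u z + α z • u z‖ ^ 2 + 2 * ((2 * α z) ^ 2 * ‖u z‖ ^ 2) := by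
          rw [← h2]; exact h1
      _ ≤ 2 * ‖Q z‖ ^ 2 + 2 * (τ ^ 2 * ‖u z‖ ^ 2) := by
          rw [hQdef]
          have := mul_le_mul_of_nonneg_left h3 (by norm_num : (0:ℝ) ≤ 2)
          linarith
      _ = 2 * ‖Q z‖ ^ 2 + 2 * τ ^ 2 * ‖u z‖ ^ 2 := by ring
  -- vanishing off the support of v
  have hvanv : ∀ z ∉ tsupport v, v z = 0 := fun z hz => image_eq_zero_of_notMem_tsupport hz
  have hvanu : ∀ z ∉ tsupport v, u z = 0 := by
    intro z hz
    rw [hudef]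
    simp [hvanv z hz]
  have htsuv : tsupport u ⊆ tsupport v := by
    apply closure_minimal _ (isClosed_tsupport v)
    intro z hz
    by_contra hzt
    exact (Function.mem_support.mp hz) (hvanu z hzt)
  have hvandu : ∀ z ∉ tsupport v, fderiv ℝ u z = 0 := by
    intro z hz
    by_contra h
    exact hz (htsuv (support_fderiv_subset ℝ (show z ∈ Function.support (fderiv ℝ u) from h)))
  have hvandv : ∀ z ∉ tsupport v, fderiv ℝ v z = 0 := by
    intro z hz
    by_contra h
    exact hz (support_fderiv_subset ℝ (show z ∈ Function.support (fderiv ℝ v) from h))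
  -- continuity facts
  have hcont_u : Continuous u := hu1.continuous
  have hcont_du : Continuous (fderiv ℝ u) := hu1.continuous_fderiv one_ne_zero
  have hcont_dv : Continuous (fderiv ℝ v) := hv.continuous_fderiv one_ne_zero
  have hcont_ux : Continuous fun z => fderiv ℝ u z 1 := hcont_du.clm_apply continuous_const
  have hcont_uy : Continuous fun z => fderiv ℝ u z Complex.I := hcont_du.clm_apply continuous_const
  have hcont_dzu : Continuous (dz u) := by
    apply Continuous.const_smul
    exact hcont_ux.sub (hcont_uy.const_smul Complex.I)
  have hcont_dbv : Continuous (dbar v) := by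
    apply Continuous.const_smul
    exact (hcont_dv.clm_apply continuous_const).add
      ((hcont_dv.clm_apply continuous_const).const_smul Complex.I)
  have hcont_dzv : Continuous (dz v) := by
    apply Continuous.const_smul
    exact (hcont_dv.clm_apply continuous_const).sub
      ((hcont_dv.clm_apply continuous_const).const_smul Complex.I)
  have hcont_ψ : Continuous ψ := hψc.continuous
  have hcont_α : Continuous α := by
    rw [hαdef]
    exact (continuous_const.mul (continuous_const.add Complex.continuous_re)).div_const 4
  have hcont_Q : Continuous Q := by
    rw [hQdef]
    exact hcont_dzu.add (hcont_α.smul hcont_u)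
  -- integrability helper
  have integCS : ∀ f : ℂ → ℝ, Continuous f → (∀ z ∉ tsupport v, f z = 0) →
      Integrable f (volume : Measure ℂ) := by
    intro f hf h0
    exact hf.integrable_of_hasCompactSupport (HasCompactSupport.intro hsupp h0)
  -- the two integral identities
  have Eq1 : ∫ z : ℂ, BilMap (fderiv ℝ u z 1) (fderiv ℝ u z Complex.I) = 0 :=
    integral_bil_fderiv_eq_zero BilMap (fun x y => BilMap_anti x y) hu1 hucs
  -- N = ‖u‖² and its derivative
  set N : ℂ → ℝ := fun z => ‖u z‖ ^ 2 with hNdef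
  have hNeq : N = fun z => (inner ℂ (u z) (u z) : ℂ).re := by
    funext z
    rw [hNdef]
    exact norm_sq_eq_re_inner' (u z)
  have hNd : ∀ z : ℂ, HasFDerivAt N (Complex.reCLM.comp ((fderivInnerCLM ℂ (u z, u z)).comp
      ((fderiv ℝ u z).prod (fderiv ℝ u z)))) z := by
    intro z
    have h1 : HasFDerivAt u (fderiv ℝ u z) z := (hu1.differentiable one_ne_zero z).hasFDerivAt
    have h2 := HasFDerivAt.inner ℂ h1 h1
    have h3 := Complex.reCLM.hasFDerivAt.comp z h2
    rw [hNeq]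
    exact h3
  have hN1 : ∀ z : ℂ, fderiv ℝ N z 1 = 2 * (inner ℂ (fderiv ℝ u z 1) (u z) : ℂ).re := by
    intro z
    rw [(hNd z).fderiv]
    simp only [ContinuousLinearMap.coe_comp', Function.comp_apply,
      ContinuousLinearMap.prod_apply, fderivInnerCLM_apply, Complex.reCLM_apply]
    rw [← inner_conj_symm (u z) (fderiv ℝ u z 1)]
    simp only [Complex.add_re, Complex.conj_re]
    ring
  have hαd : ∀ z : ℂ, HasFDerivAt α ((τ / 4) • Complex.reCLM) z := by
    intro z
    have hre : HasFDerivAt (fun w : ℂ => w.re) Complex.reCLM z := Complex.reCLM.hasFDerivAt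
    have h := (((hasFDerivAt_const (1 : ℝ) z).add hre).const_mul τ).const_mul (4⁻¹ : ℝ)
    have heq : α = fun w : ℂ => 4⁻¹ * (τ * ((fun _ : ℂ => (1:ℝ)) w + w.re)) := by
      rw [hαdef]
      funext w
      ring
    rw [heq]
    refine HasFDerivAt.congr_fderiv h ?_
    ext w
    simp
    ring
  set G : ℂ → ℝ := fun z => α z * N z with hGdef
  have hGd : ∀ z : ℂ, HasFDerivAt G (α z • (Complex.reCLM.comp ((fderivInnerCLM ℂ (u z, u z)).comp
      ((fderiv ℝ u z).prod (fderiv ℝ u z)))) + N z • ((τ / 4) • Complex.reCLM)) z :=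
    fun z => (hαd z).mul (hNd z)
  have hGfd : ∀ z : ℂ, fderiv ℝ G z 1
      = τ / 4 * N z + 2 * α z * (inner ℂ (fderiv ℝ u z 1) (u z) : ℂ).re := by
    intro z
    have h0 : fderiv ℝ G z 1 = α z * (fderiv ℝ N z 1) + N z * (τ / 4) := by
      rw [(hGd z).fderiv, ← (hNd z).fderiv]
      simp
    rw [h0, hN1 z]
    ring
  have hG1 : ContDiff ℝ 1 G := by
    rw [hGdef]
    apply ContDiff.mul
    · rw [hαdef]
      exact (contDiff_const.mul (contDiff_const.add Complex.reCLM.contDiff)).div_const 4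
    · rw [hNeq]
      exact Complex.reCLM.contDiff.comp (ContDiff.inner ℂ hu1 hu1)
  have hGcs : HasCompactSupport G := by
    apply HasCompactSupport.intro hsupp
    intro z hz
    rw [hGdef]
    simp [hNdef, hvanu z hz]
  have Eq2 : ∫ z : ℂ, fderiv ℝ G z 1 = 0 := integral_fderiv_apply_eq_zero hG1 hGcs 1
  -- integrability of all pieces
  have iN : Integrable N (volume : Measure ℂ) := by
    apply integCS
    · rw [hNdef]; exact hcont_u.norm.pow 2
    · intro z hz; rw [hNdef]; simp [hvanu z hz]
  have iQ : Integrable (fun z => ‖Q z‖ ^ 2) (volume : Measure ℂ) := by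
    apply integCS
    · exact hcont_Q.norm.pow 2
    · intro z hz
      rw [hQdef]
      simp only [dz, hvandu z hz, hvanu z hz]
      simp
  have iB : Integrable (fun z => ‖ψ z • dbar v z‖ ^ 2) (volume : Measure ℂ) := by
    apply integCS
    · exact (hcont_ψ.smul hcont_dbv).norm.pow 2
    · intro z hz
      simp only [dbar, hvandv z hz]
      simp
  have iD : Integrable (fun z => ‖ψ z • dz v z‖ ^ 2) (volume : Measure ℂ) := by
    apply integCS
    · exact (hcont_ψ.smul hcont_dzv).norm.pow 2
    · intro z hz
      simp only [dz, hvandv z hz]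
      simp
  have iBil : Integrable (fun z => BilMap (fderiv ℝ u z 1) (fderiv ℝ u z Complex.I))
      (volume : Measure ℂ) := by
    apply integCS
    · exact ((BilMap.continuous.comp hcont_ux).clm_apply hcont_uy)
    · intro z hz
      rw [hvandu z hz]
      simp
  have iIP : Integrable (fun z => 2 * α z * (inner ℂ (fderiv ℝ u z 1) (u z) : ℂ).re)
      (volume : Measure ℂ) := by
    apply integCS
    · exact (continuous_const.mul hcont_α).mul
        (Complex.continuous_re.comp (hcont_ux.inner hcont_u))
    · intro z hz
      rw [hvandu z hz]
      simp
  -- the inner-product cross term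
  have Eq2' : τ / 4 * (∫ z : ℂ, N z)
      + ∫ z : ℂ, 2 * α z * (inner ℂ (fderiv ℝ u z 1) (u z) : ℂ).re = 0 := by
    have h1 : (fun z : ℂ => fderiv ℝ G z 1)
        = fun z => τ / 4 * N z + 2 * α z * (inner ℂ (fderiv ℝ u z 1) (u z) : ℂ).re :=
      funext hGfd
    rw [h1] at Eq2
    rw [integral_add (iN.const_mul (τ / 4)) iIP, integral_const_mul] at Eq2
    exact Eq2
  -- the three main integral relations
  set IV : ℝ := ∫ z : ℂ, N z with hIVdef
  set IQ : ℝ := ∫ z : ℂ, ‖Q z‖ ^ 2 with hIQdef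
  set IB : ℝ := ∫ z : ℂ, ‖ψ z • dbar v z‖ ^ 2 with hIBdef
  set ID : ℝ := ∫ z : ℂ, ‖ψ z • dz v z‖ ^ 2 with hIDdef
  have hIB : IB = IQ + τ / 4 * IV := by
    have h1 : IB = ∫ z : ℂ, (‖Q z‖ ^ 2 + BilMap (fderiv ℝ u z 1) (fderiv ℝ u z Complex.I)
        - 2 * α z * (inner ℂ (fderiv ℝ u z 1) (u z) : ℂ).re) := by
      rw [hIBdef]
      congr 1
      funext z
      exact P1 z
    have iQB : Integrable (fun z : ℂ => ‖Q z‖ ^ 2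
        + BilMap (fderiv ℝ u z 1) (fderiv ℝ u z Complex.I)) (volume : Measure ℂ) :=
      iQ.add iBil
    rw [h1, integral_sub iQB iIP, integral_add iQ iBil, Eq1]
    rw [← hIQdef]
    linarith [Eq2']
  have hIV0 : 0 ≤ IV := integral_nonneg fun z => by rw [hNdef]; positivity
  have hIQ0 : 0 ≤ IQ := integral_nonneg fun z => sq_nonneg _
  have hIB0 : 0 ≤ IB := integral_nonneg fun z => sq_nonneg _
  have hID0 : 0 ≤ ID := integral_nonneg fun z => sq_nonneg _
  have hIBge : τ / 4 * IV ≤ IB := by linarith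
  have hID2 : ID ≤ 2 * IB + 2 * τ ^ 2 * IV := by
    have h1 : ID ≤ ∫ z : ℂ, (2 * ‖Q z‖ ^ 2 + 2 * τ ^ 2 * ‖u z‖ ^ 2) := by
      rw [hIDdef]
      apply integral_mono iD ((iQ.const_mul 2).add (iN.const_mul (2 * τ ^ 2)))
      intro z
      simpa [hNdef] using P2 z
    rw [integral_add (iQ.const_mul 2) (iN.const_mul (2 * τ ^ 2)), integral_const_mul,
      integral_const_mul, ← hIQdef, ← hIVdef] at h1
    have hpos : 0 ≤ τ / 4 * IV := by positivity
    have hIQle : IQ ≤ IB := by linarith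
    calc ID ≤ 2 * IQ + 2 * τ ^ 2 * IV := h1
      _ ≤ 2 * IB + 2 * τ ^ 2 * IV := by linarith
  -- continuity of the weight
  have hcont_phi : Continuous phi := by
    have h : Continuous fun z : ℂ => z.re + z.re ^ 2 / 2 :=
      Complex.continuous_re.add ((Complex.continuous_re.pow 2).div_const 2)
    exact h
  have hcont_e : Continuous fun z : ℂ => Real.exp (τ * phi z) :=
    Real.continuous_exp.comp (continuous_const.mul hcont_phi)
  -- pointwise weight identities
  have hBpt : ∀ z : ℂ, ‖dbar v z‖ ^ 2 * Real.exp (τ * phi z) = ‖ψ z • dbar v z‖ ^ 2 := by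
    intro z
    rw [norm_smul, Real.norm_eq_abs, abs_of_pos (hψpos z), mul_pow, hψsq]
    ring
  have hDpt : ∀ z : ℂ, ‖dz v z‖ ^ 2 * Real.exp (τ * phi z) = ‖ψ z • dz v z‖ ^ 2 := by
    intro z
    rw [norm_smul, Real.norm_eq_abs, abs_of_pos (hψpos z), mul_pow, hψsq]
    ring
  have hNpt : ∀ z : ℂ, ‖v z‖ ^ 2 * Real.exp (τ * phi z) = N z := by
    intro z
    rw [hNdef]
    simp only [hudef]
    rw [norm_smul, Real.norm_eq_abs, abs_of_pos (hψpos z), mul_pow, hψsq]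
    ring
  -- restriction to the ball
  have hres : ∀ f : ℂ → ℝ, (∀ z ∉ tsupport v, f z = 0) →
      ∫ z in ball (0 : ℂ) 1, f z = ∫ z : ℂ, f z := by
    intro f h0
    apply setIntegral_eq_integral_of_forall_compl_eq_zero
    intro z hz
    exact h0 z fun hmem => hz (hsub hmem)
  have hVb : ∫ z in ball (0 : ℂ) 1, ‖v z‖ ^ 2 * Real.exp (τ * phi z) = IV := by
    rw [hIVdef]
    calc ∫ z in ball (0 : ℂ) 1, ‖v z‖ ^ 2 * Real.exp (τ * phi z)
        = ∫ z in ball (0 : ℂ) 1, N z := by simp only [hNpt]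
      _ = ∫ z : ℂ, N z := hres N fun z hz => by rw [hNdef]; simp [hvanu z hz]
  have hBb : ∫ z in ball (0 : ℂ) 1, ‖dbar v z‖ ^ 2 * Real.exp (τ * phi z) = IB := by
    rw [hIBdef]
    calc ∫ z in ball (0 : ℂ) 1, ‖dbar v z‖ ^ 2 * Real.exp (τ * phi z)
        = ∫ z in ball (0 : ℂ) 1, ‖ψ z • dbar v z‖ ^ 2 := by simp only [hBpt]
      _ = ∫ z : ℂ, ‖ψ z • dbar v z‖ ^ 2 := by
          apply hres
          intro z hz
          simp only [dbar, hvandv z hz]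
          simp
  have hDb : ∫ z in ball (0 : ℂ) 1, ‖dz v z‖ ^ 2 * Real.exp (τ * phi z) = ID := by
    rw [hIDdef]
    calc ∫ z in ball (0 : ℂ) 1, ‖dz v z‖ ^ 2 * Real.exp (τ * phi z)
        = ∫ z in ball (0 : ℂ) 1, ‖ψ z • dz v z‖ ^ 2 := by simp only [hDpt]
      _ = ∫ z : ℂ, ‖ψ z • dz v z‖ ^ 2 := by
          apply hres
          intro z hz
          simp only [dz, hvandv z hz]
          simp
  -- integrability on the ball
  have hmeas_ball : MeasurableSet (ball (0 : ℂ) 1) := measurableSet_ball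
  have hwbdd : ∀ z ∈ ball (0 : ℂ) 1, ‖w z‖ ≤ 1 / 10 := by
    intro z hz
    have h1 := hwbd z hz
    have h2 : ‖v z‖ ^ ((1 : ℝ) / 2) ≤ 1 :=
      Real.rpow_le_one (norm_nonneg _) (hvbd z) (by norm_num)
    have h3 : (0:ℝ) ≤ ‖v z‖ ^ ((1 : ℝ) / 2) := Real.rpow_nonneg (norm_nonneg _) _
    have h4 : min ‖dz v z‖ 1 ≤ 1 := min_le_right _ _
    have h5 : (0:ℝ) ≤ min ‖dz v z‖ 1 := le_min (norm_nonneg _) zero_le_one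
    nlinarith
  have hexpbd : ∀ z ∈ ball (0 : ℂ) 1, Real.exp (τ * phi z) ≤ Real.exp (2 * τ) := by
    intro z hz
    apply Real.exp_le_exp.2
    have h4 : ‖z‖ < 1 := by simpa [Complex.dist_eq] using hz
    have hre : |z.re| < 1 := lt_of_le_of_lt (Complex.abs_re_le_norm z) h4
    have h6 : -1 < z.re := by cases abs_lt.1 hre; assumption
    have h7 : z.re < 1 := by cases abs_lt.1 hre; assumption
    unfold phi
    have h8 : z.re + z.re ^ 2 / 2 ≤ 2 := by nlinarith
    have h9 := mul_le_mul_of_nonneg_left h8 hτ0.le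
    linarith
  have hwsm : MeasureTheory.AEStronglyMeasurable
      (fun z => ‖w z‖ ^ 2 * Real.exp (τ * phi z)) ((volume : Measure ℂ).restrict (ball 0 1)) := by
    have h1 : StronglyMeasurable fun z => ‖w z‖ ^ 2 * Real.exp (τ * phi z) := by
      have h2 : (fun z => ‖w z‖ ^ 2 * Real.exp (τ * phi z))
          = fun z => ‖w z‖ * ‖w z‖ * Real.exp (τ * phi z) := by
        funext z; ring
      rw [h2]
      exact ((hw.norm.mul hw.norm).mul hcont_e.stronglyMeasurable)
    exact h1.aestronglyMeasurable
  have iWball : IntegrableOn (fun z => ‖w z‖ ^ 2 * Real.exp (τ * phi z))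
      (ball (0 : ℂ) 1) (volume : Measure ℂ) := by
    have hfin : (volume : Measure ℂ) (ball (0 : ℂ) 1) < ⊤ := measure_ball_lt_top
    have hconst : IntegrableOn (fun _ : ℂ => (1 / 10 : ℝ) ^ 2 * Real.exp (2 * τ))
        (ball (0 : ℂ) 1) (volume : Measure ℂ) := integrableOn_const hfin.ne
    apply Integrable.mono' hconst hwsm
    rw [ae_restrict_iff' hmeas_ball]
    filter_upwards with z hz
    have h1 := hwbdd z hz
    have h2 := hexpbd z hz
    have habs : ‖‖w z‖ ^ 2 * Real.exp (τ * phi z)‖ = ‖w z‖ ^ 2 * Real.exp (τ * phi z) :=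
      Real.norm_of_nonneg (by positivity)
    rw [habs]
    have h3 : ‖w z‖ ^ 2 ≤ (1/10 : ℝ) ^ 2 := by nlinarith [norm_nonneg (w z)]
    nlinarith [Real.exp_pos (τ * phi z), Real.exp_pos (2 * τ)]
  have iVball : IntegrableOn (fun z => ‖v z‖ ^ 2 * Real.exp (τ * phi z))
      (ball (0 : ℂ) 1) (volume : Measure ℂ) := by
    apply Integrable.integrableOn
    apply integCS
    · exact (hv.continuous.norm.pow 2).mul hcont_e
    · intro z hz; simp [hvanv z hz]
  have iDball : IntegrableOn (fun z => ‖dz v z‖ ^ 2 * Real.exp (τ * phi z))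
      (ball (0 : ℂ) 1) (volume : Measure ℂ) := by
    apply Integrable.integrableOn
    apply integCS
    · exact (hcont_dzv.norm.pow 2).mul hcont_e
    · intro z hz
      simp only [dz, hvandv z hz]
      simp
  have iBball : IntegrableOn (fun z => ‖dbar v z‖ ^ 2 * Real.exp (τ * phi z))
      (ball (0 : ℂ) 1) (volume : Measure ℂ) := by
    apply Integrable.integrableOn
    apply integCS
    · exact (hcont_dbv.norm.pow 2).mul hcont_e
    · intro z hz
      simp only [dbar, hvandv z hz]
      simp
  have iTball : IntegrableOn (fun z => ‖dbar v z - w z‖ ^ 2 * Real.exp (τ * phi z))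
      (ball (0 : ℂ) 1) (volume : Measure ℂ) := by
    obtain ⟨M, hM⟩ := hcont_dbv.bounded_above_of_compact_support
      (HasCompactSupport.intro hsupp (fun z hz => by simp only [dbar, hvandv z hz]; simp))
    have hfin : (volume : Measure ℂ) (ball (0 : ℂ) 1) < ⊤ := measure_ball_lt_top
    have hconst : IntegrableOn (fun _ : ℂ => (M + 1/10 : ℝ) ^ 2 * Real.exp (2 * τ))
        (ball (0 : ℂ) 1) (volume : Measure ℂ) := integrableOn_const hfin.ne
    have hsm : MeasureTheory.AEStronglyMeasurable
        (fun z => ‖dbar v z - w z‖ ^ 2 * Real.exp (τ * phi z))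
        ((volume : Measure ℂ).restrict (ball 0 1)) := by
      have h2 : (fun z => ‖dbar v z - w z‖ ^ 2 * Real.exp (τ * phi z))
          = fun z => ‖dbar v z - w z‖ * ‖dbar v z - w z‖ * Real.exp (τ * phi z) := by
        funext z; ring
      rw [h2]
      have h3 : StronglyMeasurable fun z => ‖dbar v z - w z‖ :=
        (hcont_dbv.stronglyMeasurable.sub hw).norm
      exact ((h3.mul h3).mul hcont_e.stronglyMeasurable).aestronglyMeasurable
    apply Integrable.mono' hconst hsm
    rw [ae_restrict_iff' hmeas_ball]
    filter_upwards with z hz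
    have h1 := hwbdd z hz
    have h2 := hexpbd z hz
    have h4 : ‖dbar v z - w z‖ ≤ M + 1/10 := by
      calc ‖dbar v z - w z‖ ≤ ‖dbar v z‖ + ‖w z‖ := norm_sub_le _ _
        _ ≤ M + 1/10 := add_le_add (hM z) h1
    have habs : ‖‖dbar v z - w z‖ ^ 2 * Real.exp (τ * phi z)‖
        = ‖dbar v z - w z‖ ^ 2 * Real.exp (τ * phi z) := Real.norm_of_nonneg (by positivity)
    rw [habs]
    have h5 : ‖dbar v z - w z‖ ^ 2 ≤ (M + 1/10) ^ 2 := by nlinarith [norm_nonneg (dbar v z - w z)]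
    nlinarith [Real.exp_pos (τ * phi z), Real.exp_pos (2 * τ), sq_nonneg (M + 1/10)]
  -- bound the w-integral
  have hWpt : ∀ z ∈ ball (0 : ℂ) 1, ‖w z‖ ^ 2 * Real.exp (τ * phi z)
      ≤ τ / 200 * (‖v z‖ ^ 2 * Real.exp (τ * phi z))
        + 1 / (200 * τ) * (‖dz v z‖ ^ 2 * Real.exp (τ * phi z)) := by
    intro z hz
    have hb := hwbd z hz
    have hq0 : (0:ℝ) ≤ ‖v z‖ := norm_nonneg _
    have hd0 : (0:ℝ) ≤ ‖dz v z‖ := norm_nonneg _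
    have hsqr : (‖v z‖ ^ ((1 : ℝ) / 2)) ^ 2 = ‖v z‖ := by
      rw [← Real.rpow_natCast (‖v z‖ ^ ((1 : ℝ) / 2)) 2, ← Real.rpow_mul hq0]
      norm_num
    have hw2 : ‖w z‖ ^ 2 ≤ 1 / 100 * (‖v z‖ * ‖dz v z‖) := by
      have h2 : ‖w z‖ ^ 2 ≤ (1 / 10 * ‖v z‖ ^ ((1 : ℝ) / 2) * min ‖dz v z‖ 1) ^ 2 :=
        pow_le_pow_left₀ (norm_nonneg _) hb 2
      have h3 : (1 / 10 * ‖v z‖ ^ ((1 : ℝ) / 2) * min ‖dz v z‖ 1) ^ 2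
          = 1 / 100 * ‖v z‖ * (min ‖dz v z‖ 1) ^ 2 := by
        rw [mul_pow, mul_pow, hsqr]
        ring
      have h5 : min ‖dz v z‖ 1 ≤ ‖dz v z‖ := min_le_left _ _
      have h6 : min ‖dz v z‖ 1 ≤ 1 := min_le_right _ _
      have h7 : (0:ℝ) ≤ min ‖dz v z‖ 1 := le_min hd0 zero_le_one
      have h4 : (min ‖dz v z‖ 1) ^ 2 ≤ ‖dz v z‖ := by nlinarith
      calc ‖w z‖ ^ 2 ≤ 1 / 100 * ‖v z‖ * (min ‖dz v z‖ 1) ^ 2 := by rw [← h3]; exact h2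
        _ ≤ 1 / 100 * (‖v z‖ * ‖dz v z‖) := by nlinarith
    have hqd : ‖v z‖ * ‖dz v z‖ ≤ τ / 2 * ‖v z‖ ^ 2 + 1 / (2 * τ) * ‖dz v z‖ ^ 2 := by
      rw [← sub_nonneg]
      have h8 : τ / 2 * ‖v z‖ ^ 2 + 1 / (2 * τ) * ‖dz v z‖ ^ 2 - ‖v z‖ * ‖dz v z‖
          = (τ * ‖v z‖ - ‖dz v z‖) ^ 2 / (2 * τ) := by
        field_simp
        ring
      rw [h8]
      positivity
    have hcomb : ‖w z‖ ^ 2 ≤ τ / 200 * ‖v z‖ ^ 2 + 1 / (200 * τ) * ‖dz v z‖ ^ 2 := by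
      have heq9 : (1:ℝ) / 100 * (τ / 2 * ‖v z‖ ^ 2 + 1 / (2 * τ) * ‖dz v z‖ ^ 2)
          = τ / 200 * ‖v z‖ ^ 2 + 1 / (200 * τ) * ‖dz v z‖ ^ 2 := by
        field_simp
        ring
      nlinarith
    have hcomb2 := mul_le_mul_of_nonneg_right hcomb (Real.exp_nonneg (τ * phi z))
    calc ‖w z‖ ^ 2 * Real.exp (τ * phi z)
        ≤ (τ / 200 * ‖v z‖ ^ 2 + 1 / (200 * τ) * ‖dz v z‖ ^ 2) * Real.exp (τ * phi z) := hcomb2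
      _ = τ / 200 * (‖v z‖ ^ 2 * Real.exp (τ * phi z))
          + 1 / (200 * τ) * (‖dz v z‖ ^ 2 * Real.exp (τ * phi z)) := by ring
  have hW : ∫ z in ball (0 : ℂ) 1, ‖w z‖ ^ 2 * Real.exp (τ * phi z)
      ≤ τ / 200 * IV + 1 / (200 * τ) * ID := by
    have iSum : IntegrableOn (fun z => τ / 200 * (‖v z‖ ^ 2 * Real.exp (τ * phi z))
        + 1 / (200 * τ) * (‖dz v z‖ ^ 2 * Real.exp (τ * phi z)))
        (ball (0 : ℂ) 1) (volume : Measure ℂ) :=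
      (iVball.const_mul (τ / 200)).add (iDball.const_mul (1 / (200 * τ)))
    have h1 := setIntegral_mono_on iWball iSum hmeas_ball hWpt
    rw [integral_add (iVball.const_mul (τ / 200)) (iDball.const_mul (1 / (200 * τ))),
      integral_const_mul, integral_const_mul] at h1
    rw [hVb, hDb] at h1
    exact h1
  -- lower bound for the target integral
  have hT : IB / 2 - (∫ z in ball (0 : ℂ) 1, ‖w z‖ ^ 2 * Real.exp (τ * phi z))
      ≤ ∫ z in ball (0 : ℂ) 1, ‖dbar v z - w z‖ ^ 2 * Real.exp (τ * phi z) := by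
    have hpt : ∀ z ∈ ball (0 : ℂ) 1,
        ‖dbar v z‖ ^ 2 * Real.exp (τ * phi z) / 2 - ‖w z‖ ^ 2 * Real.exp (τ * phi z)
        ≤ ‖dbar v z - w z‖ ^ 2 * Real.exp (τ * phi z) := by
      intro z _
      have h := sq_bound1 (dbar v z) (w z)
      nlinarith [Real.exp_pos (τ * phi z), mul_le_mul_of_nonneg_right h
        (Real.exp_nonneg (τ * phi z))]
    have iSub : IntegrableOn (fun z => ‖dbar v z‖ ^ 2 * Real.exp (τ * phi z) / 2
        - ‖w z‖ ^ 2 * Real.exp (τ * phi z)) (ball (0 : ℂ) 1) (volume : Measure ℂ) :=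
      (iBball.div_const 2).sub iWball
    have h1 := setIntegral_mono_on iSub iTball hmeas_ball hpt
    rw [integral_sub (iBball.div_const 2) iWball, integral_div, hBb] at h1
    exact h1
  -- final numeric assembly
  rw [hVb]
  have h9 : 1 / (200 * τ) * ID ≤ 1 / (200 * τ) * (2 * IB + 2 * τ ^ 2 * IV) :=
    mul_le_mul_of_nonneg_left hID2 (by positivity)
  have h10 : 1 / (200 * τ) * (2 * IB + 2 * τ ^ 2 * IV) = IB / (100 * τ) + τ / 100 * IV := by
    field_simp
    ring
  have h11 : IB / (100 * τ) ≤ IB / 100 :=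
    div_le_div_of_nonneg_left hIB0 (by norm_num) (by linarith) |>.trans_eq rfl
  have h12 : 49 / 100 * (τ / 4 * IV) ≤ 49 / 100 * IB :=
    mul_le_mul_of_nonneg_left hIBge (by norm_num)
  have h13 : 0 ≤ τ * IV := mul_nonneg hτ0.le hIV0
  nlinarith [hW, hT, h9, h10, h11, h12, h13]
end

section
/- For every integer k ≥ 2 there exists an almost complex structure J on ℂ² that is Hölder continuous with exponent (k−1)/k (i.e. ‖J(p) − J(q)‖ ≤ K·|p−q|^{(k−1)/k} in operator norm for some constant K > 0) such that the two C¹ maps u, v : D → ℂ² defined by u(z) = (z, 0), and v(z) = (z, 0) for Im z ≤ 0 while v(z) = (z, (Im z)^k) for Im z > 0, are both J-holomorphic; in particular u and v agree on the nonempty open set {z ∈ D : Im z < 0} but u ≠ v. -/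
open Complex Metric Filter Topology

/-- The map `u(z) = (z, 0)`. -/
def umap (z : ℂ) : ℂ × ℂ := (z, 0)

/-- The map `v(z) = (z, 0)` for `Im z ≤ 0` and `v(z) = (z, (Im z)^k)` for `Im z > 0`. -/
noncomputable def vmap (k : ℕ) (z : ℂ) : ℂ × ℂ :=
  (z, if z.im ≤ 0 then 0 else ((z.im : ℂ)) ^ k)

noncomputable def Jlin (c : ℝ) : ℂ × ℂ →ₗ[ℝ] ℂ × ℂ where
  toFun p := (Complex.I * p.1, Complex.I * p.2 + (c : ℂ) * (starRingEnd ℂ) p.1)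
  map_add' p q := by simp [Prod.ext_iff]; constructor <;> ring
  map_smul' r p := by
    simp [Prod.ext_iff, Complex.real_smul]
    constructor <;> ring

noncomputable def Jclm (c : ℝ) : ℂ × ℂ →L[ℝ] ℂ × ℂ := (Jlin c).toContinuousLinearMap

lemma Jclm_apply (c : ℝ) (p : ℂ × ℂ) :
    Jclm c p = (Complex.I * p.1, Complex.I * p.2 + (c : ℂ) * (starRingEnd ℂ) p.1) := rfl

lemma Jclm_sq (c : ℝ) (x : ℂ × ℂ) : Jclm c (Jclm c x) = -x := by
  simp [Jclm_apply, Prod.ext_iff]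
  constructor <;> ring_nf <;> rw [Complex.I_sq] <;> ring

lemma Jclm_norm_sub (c c' : ℝ) : ‖Jclm c - Jclm c'‖ ≤ |c - c'| := by
  refine ContinuousLinearMap.opNorm_le_bound _ (abs_nonneg _) fun p => ?_
  have : (Jclm c - Jclm c') p = (0, ((c - c' : ℝ) : ℂ) * (starRingEnd ℂ) p.1) := by
    simp [Jclm_apply, Prod.ext_iff]; ring
  rw [this]
  rw [Prod.norm_def]
  simp only [norm_zero]
  have h1 : ‖((c - c' : ℝ) : ℂ) * (starRingEnd ℂ) p.1‖ = |c - c'| * ‖p.1‖ := by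
    rw [norm_mul, RingHomIsometric.norm_map]
    norm_cast
  rw [max_eq_right (by positivity), h1]
  gcongr
  exact le_max_left _ _

lemma hasDerivAt_maxpow (k : ℕ) (hk : 2 ≤ k) (y : ℝ) :
    HasDerivAt (fun t : ℝ => (max t 0) ^ k) (k * (max y 0) ^ (k - 1)) y := by
  rcases lt_trichotomy y 0 with hy | hy | hy
  · have h0 : (fun t : ℝ => (max t 0) ^ k) =ᶠ[nhds y] fun _ => (0 : ℝ) := by
      filter_upwards [eventually_lt_nhds hy] with t ht
      rw [max_eq_right ht.le, zero_pow (by omega)]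
    have : HasDerivAt (fun _ : ℝ => (0 : ℝ)) 0 y := hasDerivAt_const y 0
    have h := this.congr_of_eventuallyEq h0
    simpa [max_eq_right hy.le, zero_pow (show k - 1 ≠ 0 by omega)] using h
  · subst hy
    rw [hasDerivAt_iff_isLittleO]
    simp only [max_self, zero_pow (show k ≠ 0 by omega), zero_pow (show k - 1 ≠ 0 by omega),
      mul_zero, sub_zero, zero_sub, smul_zero, sub_zero]
    rw [Asymptotics.isLittleO_iff]
    intro ε hε
    have : ∀ᶠ t : ℝ in nhds 0, |t| < min ε 1 := by
      have hb := Metric.ball_mem_nhds (0:ℝ) (lt_min hε one_pos)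
      filter_upwards [hb] with t ht
      simpa [Real.dist_eq] using ht
    filter_upwards [this] with t ht
    have h1 : |t| < ε := lt_of_lt_of_le ht (min_le_left _ _)
    have h2 : |t| ≤ 1 := le_of_lt (lt_of_lt_of_le ht (min_le_right _ _))
    have hm : max t 0 ≤ |t| := max_le (le_abs_self t) (abs_nonneg t)
    have hm0 : (0:ℝ) ≤ max t 0 := le_max_right _ _
    calc ‖(max t 0) ^ k‖ = (max t 0) ^ k := by
          rw [Real.norm_eq_abs, _root_.abs_of_nonneg (pow_nonneg hm0 k)]
      _ ≤ |t| ^ k := pow_le_pow_left₀ hm0 hm k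
      _ = |t| ^ (k - 1) * |t| := by rw [← pow_succ]; congr 1; omega
      _ ≤ |t| ^ 1 * |t| :=
          mul_le_mul_of_nonneg_right
            (pow_le_pow_of_le_one (abs_nonneg t) h2 (by omega)) (abs_nonneg t)
      _ ≤ ε * ‖t‖ := by rw [pow_one, Real.norm_eq_abs]; gcongr
  · have h0 : (fun t : ℝ => (max t 0) ^ k) =ᶠ[nhds y] fun t => t ^ k := by
      filter_upwards [eventually_gt_nhds hy] with t ht
      rw [max_eq_left ht.le]
    have h := (hasDerivAt_pow k y).congr_of_eventuallyEq h0
    simpa [max_eq_left hy.le] using h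

lemma real_holder {x y α : ℝ} (hx : 0 ≤ x) (hy : 0 ≤ y) (h0 : 0 ≤ α) (h1 : α ≤ 1) :
    |x ^ α - y ^ α| ≤ |x - y| ^ α := by
  wlog hxy : y ≤ x generalizing x y
  · rw [abs_sub_comm, abs_sub_comm x y]; exact this hy hx (le_of_not_ge hxy)
  have key : x ^ α ≤ (x - y) ^ α + y ^ α := by
    have hab : (0:ℝ) ≤ x - y := sub_nonneg.2 hxy
    calc x ^ α = ((x - y) + y) ^ α := by ring_nf
      _ ≤ (x - y) ^ α + y ^ α := by
          lift x - y to NNReal using hab with a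
          lift y to NNReal using hy with b
          have := NNReal.rpow_add_le_add_rpow a b h0 h1
          exact_mod_cast this
  rw [_root_.abs_of_nonneg (by rw [sub_nonneg]; exact Real.rpow_le_rpow hy hxy h0),
    _root_.abs_of_nonneg (sub_nonneg.2 hxy)]
  linarith

lemma vmap_eq (k : ℕ) (hk : 1 ≤ k) :
    vmap k = fun z : ℂ => (z, (((max z.im 0) ^ k : ℝ) : ℂ)) := by
  funext z
  unfold vmap
  split_ifs with h
  · simp [max_eq_right h, zero_pow (show k ≠ 0 by omega)]
  · push_neg at h
    simp [max_eq_left h.le]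
lemma hasFDerivAt_vmap (k : ℕ) (hk : 2 ≤ k) (z : ℂ) :
    HasFDerivAt (vmap k)
      ((ContinuousLinearMap.id ℝ ℂ).prod
        (Complex.ofRealCLM.comp (((k : ℝ) * (max z.im 0) ^ (k - 1)) • Complex.imCLM))) z := by
  rw [vmap_eq k (by omega)]
  refine (hasFDerivAt_id z).prodMk ?_
  have h1 := (hasDerivAt_maxpow k hk z.im).comp_hasFDerivAt z Complex.imCLM.hasFDerivAt
  exact Complex.ofRealCLM.hasFDerivAt.comp z h1

lemma hasFDerivAt_umap (z : ℂ) :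
    HasFDerivAt umap ((ContinuousLinearMap.id ℝ ℂ).prod 0) z :=
  (hasFDerivAt_id z).prodMk (hasFDerivAt_const 0 z)

noncomputable def cfun (k : ℕ) (p : ℂ × ℂ) : ℝ :=
  k * (max p.2.re 0) ^ (((k : ℝ) - 1) / k)

lemma cfun_vmap (k : ℕ) (hk : 2 ≤ k) (z : ℂ) :
    cfun k (vmap k z) = (k : ℝ) * (max z.im 0) ^ (k - 1) := by
  rw [vmap_eq k (by omega)]
  set m := max z.im 0 with hmdef
  have hm : 0 ≤ m := le_max_right _ _
  have h2 : max ((m ^ k : ℝ)) 0 = m ^ k := max_eq_left (pow_nonneg hm k)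
  unfold cfun
  simp only [Complex.ofReal_re]
  rw [h2, ← Real.rpow_natCast m k, ← Real.rpow_mul hm]
  have hk0 : (k : ℝ) ≠ 0 := by positivity
  have : (k : ℝ) * (((k : ℝ) - 1) / k) = ((k - 1 : ℕ) : ℝ) := by
    rw [Nat.cast_sub (by omega), Nat.cast_one]
    field_simp
  rw [this, Real.rpow_natCast]


/-- for every `k ≥ 2` there is an almost complex structure `J` on `ℂ²`,
Hölder continuous with exponent `(k-1)/k`, making both `u(z) = (z,0)` and the map
`v` (which equals `u` for `Im z ≤ 0` and `(z, (Im z)^k)` for `Im z > 0`)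
`J`-holomorphic; `u` and `v` agree on the nonempty open set `{Im z < 0}`, yet `u ≠ v`. -/
theorem holder_nonuniqueness (k : ℕ) (hk : 2 ≤ k) :
    ∃ (J : ℂ × ℂ → (ℂ × ℂ →L[ℝ] ℂ × ℂ)) (K : ℝ), 0 < K ∧
      (∀ p q : ℂ × ℂ, ‖J p - J q‖ ≤ K * ‖p - q‖ ^ (((k : ℝ) - 1) / k)) ∧
      (∀ p x, J p (J p x) = -x) ∧
      (∀ z ∈ ball (0 : ℂ) 1,
        fderiv ℝ umap z Complex.I = J (umap z) (fderiv ℝ umap z 1)) ∧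
      (∀ z ∈ ball (0 : ℂ) 1,
        fderiv ℝ (vmap k) z Complex.I = J (vmap k z) (fderiv ℝ (vmap k) z 1)) ∧
      (∀ z ∈ ball (0 : ℂ) 1, z.im < 0 → umap z = vmap k z) ∧
      (∃ z ∈ ball (0 : ℂ) 1, umap z ≠ vmap k z) := by
  set α : ℝ := ((k : ℝ) - 1) / k with hα
  have hk0 : (0:ℝ) < k := by positivity
  have hα0 : 0 < α := by
    apply div_pos _ hk0
    have : (2:ℝ) ≤ k := by exact_mod_cast hk
    linarith
  have hα1 : α ≤ 1 := by
    rw [div_le_one hk0]; linarith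
  refine ⟨fun p => Jclm (cfun k p), k, hk0, ?_, fun p x => Jclm_sq _ x, ?_, ?_, ?_, ?_⟩
  · -- Hölder
    intro p q
    refine (Jclm_norm_sub _ _).trans ?_
    have key : |cfun k p - cfun k q| ≤ (k : ℝ) * ‖p - q‖ ^ α := by
      unfold cfun
      rw [← mul_sub, abs_mul, Nat.abs_cast]
      gcongr
      have hmax : (0:ℝ) ≤ max p.2.re 0 := le_max_right _ _
      have hmax' : (0:ℝ) ≤ max q.2.re 0 := le_max_right _ _
      refine (real_holder hmax hmax' hα0.le hα1).trans ?_
      refine Real.rpow_le_rpow (abs_nonneg _) ?_ hα0.le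
      refine (abs_max_sub_max_le_abs _ _ _).trans ?_
      have h1 : |p.2.re - q.2.re| = |(p.2 - q.2).re| := by simp
      rw [h1]
      refine (Complex.abs_re_le_norm _).trans ?_
      have : p.2 - q.2 = (p - q).2 := rfl
      rw [this]
      exact norm_snd_le (p - q)
    exact key
  · -- u holomorphic
    intro z _
    rw [(hasFDerivAt_umap z).fderiv]
    have hc : cfun k (z, 0) = 0 := by
      unfold cfun
      simp [Real.zero_rpow (ne_of_gt hα0), ← hα]
    simp [Jclm_apply, hc, umap]
  · -- v holomorphic
    intro z _
    rw [(hasFDerivAt_vmap k hk z).fderiv]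
    simp only [Jclm_apply, cfun_vmap k hk z, ContinuousLinearMap.prod_apply,
      ContinuousLinearMap.coe_comp', Function.comp_apply, ContinuousLinearMap.smul_apply,
      ContinuousLinearMap.id_apply, Complex.imCLM_apply, Complex.ofRealCLM_apply,
      smul_eq_mul, Complex.I_im, Complex.one_im, mul_one, mul_zero, map_one, mul_comm]
    simp [Prod.ext_iff]
  · intro z _ hz
    unfold umap vmap
    simp [hz.le]
  · refine ⟨Complex.I / 2, ?_, ?_⟩
    · rw [mem_ball_zero_iff, norm_div]
      norm_num
    · unfold umap vmap
      have him : (Complex.I / 2).im = 1/2 := by simp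
      rw [him]
      norm_num
      intro h
      exact pow_ne_zero k (by norm_num) h.symm
end

section
/- There exists a constant K > 0 such that for every positive integer N and every C¹ map u : ℂ → ℂⁿ with compact support contained in D \ {0}, one has ∫_D ‖∂u/∂z̄(z)‖² |z|^{−2N} dA ≥ K ∫_D ‖u(z)‖² |z|^{−2N} dA, where dA is Lebesgue measure on ℂ; the constant K does not depend on N. -/
open Complex MeasureTheory Metric Filter Topology

noncomputable def innerB (E : Type*) [NormedAddCommGroup E] [InnerProductSpace ℂ E] :
    E →L[ℝ] E →L[ℝ] ℂ :=
  LinearMap.mkContinuous₂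
    (LinearMap.mk₂ ℝ (fun x y => (inner ℂ x y : ℂ))
      (fun x x' y => by simp [inner_add_left])
      (fun r x y => by simp only [← algebraMap_smul ℂ r, inner_smul_real_left])
      (fun x y y' => by simp [inner_add_right])
      (fun r x y => by simp only [← algebraMap_smul ℂ r, inner_smul_real_right]))
    1 (fun x y => by rw [one_mul]; exact norm_inner_le_norm x y)

variable {E : Type*} [NormedAddCommGroup E] [InnerProductSpace ℂ E]

@[simp] lemma innerB_apply (x y : E) : innerB E x y = (inner ℂ x y : ℂ) := rfl

lemma ibp_inner {f g : ℂ → E} (hf : ContDiff ℝ 1 f) (hg : ContDiff ℝ 1 g)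
    (hcs : HasCompactSupport f) (w : ℂ) :
    ∫ z : ℂ, (inner ℂ (f z) (fderiv ℝ g z w) : ℂ)
      = - ∫ z : ℂ, (inner ℂ (fderiv ℝ f z w) (g z) : ℂ) := by
  have cf : Continuous f := hf.continuous
  have cg : Continuous g := hg.continuous
  have cf' : Continuous (fun z => fderiv ℝ f z w) :=
    (hf.continuous_fderiv one_ne_zero).clm_apply continuous_const
  have cg' : Continuous (fun z => fderiv ℝ g z w) :=
    (hg.continuous_fderiv one_ne_zero).clm_apply continuous_const
  have hfz : ∀ x, x ∉ tsupport f → f x = 0 := fun x hx => image_eq_zero_of_notMem_tsupport hx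
  have hfz' : ∀ x, x ∉ tsupport f → fderiv ℝ f x = 0 := fun x hx =>
    Function.notMem_support.mp (fun h => hx (support_fderiv_subset ℝ h))
  have h1 : Integrable (fun z => (inner ℂ (fderiv ℝ f z w) (g z) : ℂ)) volume := by
    apply (cf'.inner cg).integrable_of_hasCompactSupport
    exact HasCompactSupport.intro hcs (fun x hx => by simp [hfz' x hx])
  have h2 : Integrable (fun z => (inner ℂ (f z) (fderiv ℝ g z w) : ℂ)) volume := by
    apply (cf.inner cg').integrable_of_hasCompactSupport
    exact HasCompactSupport.intro hcs (fun x hx => by simp [hfz x hx])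
  have h3 : Integrable (fun z => (inner ℂ (f z) (g z) : ℂ)) volume := by
    apply (cf.inner cg).integrable_of_hasCompactSupport
    exact HasCompactSupport.intro hcs (fun x hx => by simp [hfz x hx])
  simpa using integral_bilinear_fderiv_right_eq_neg_left_of_integrable
    (B := innerB E) (μ := volume) (v := w) h1 h2 h3
    (fun x _ => hf.differentiable one_ne_zero x) (fun x _ => hg.differentiable one_ne_zero x)

lemma integral_inner_deriv_symm {v : ℂ → E} (hv : ContDiff ℝ 1 v) (hcs : HasCompactSupport v) :
    ∫ z : ℂ, (inner ℂ (fderiv ℝ v z 1) (fderiv ℝ v z Complex.I) : ℂ)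
      = ∫ z : ℂ, (inner ℂ (fderiv ℝ v z Complex.I) (fderiv ℝ v z 1) : ℂ) := by
  have hdv : Differentiable ℝ v := hv.differentiable one_ne_zero
  have cv : Continuous v := hv.continuous
  have cfd : Continuous (fderiv ℝ v) := hv.continuous_fderiv one_ne_zero
  have cvx : Continuous (fun z => fderiv ℝ v z 1) := cfd.clm_apply continuous_const
  have cvy : Continuous (fun z => fderiv ℝ v z Complex.I) := cfd.clm_apply continuous_const
  have hcsf : HasCompactSupport (fderiv ℝ v) := hcs.fderiv (𝕜 := ℝ)
  obtain ⟨M, hM⟩ : ∃ M, ∀ z, ‖fderiv ℝ v z‖ ≤ M := hcsf.exists_bound_of_continuous cfd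
  have hM0 : 0 ≤ M := le_trans (norm_nonneg _) (hM 0)
  have hfz' : ∀ x, x ∉ tsupport v → fderiv ℝ v x = 0 := fun x hx =>
    Function.notMem_support.mp (fun h => hx (support_fderiv_subset ℝ h))
  -- Lipschitz bound
  have lip : ∀ a b : ℂ, ‖v a - v b‖ ≤ M * ‖a - b‖ := by
    intro a b
    exact Convex.norm_image_sub_le_of_norm_fderiv_le (fun x _ => hdv x)
      (fun x _ => hM x) convex_univ (Set.mem_univ b) (Set.mem_univ a)
  -- difference quotient bound
  have dq_bound : ∀ (h : ℝ), h ≠ 0 → ∀ (z c : ℂ), ‖c - z‖ = |h| →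
      ‖h⁻¹ • (v c - v z)‖ ≤ M := by
    intro h hh z c hc
    rw [norm_smul, norm_inv, Real.norm_eq_abs]
    calc |h|⁻¹ * ‖v c - v z‖ ≤ |h|⁻¹ * (M * ‖c - z‖) := by
          apply mul_le_mul_of_nonneg_left (lip c z) (by positivity)
      _ = M := by rw [hc]; field_simp
  -- the dominating function
  set B : ℂ → ℝ := fun z => ‖fderiv ℝ v z‖ * M with hB
  have hBint : Integrable B volume := by
    apply ((cfd.norm).mul continuous_const).integrable_of_hasCompactSupport
    exact HasCompactSupport.intro hcsf (fun x hx => by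
      simp [hB, image_eq_zero_of_notMem_tsupport hx])
  have hvxB : ∀ z (e : E), ‖e‖ ≤ M → ‖(inner ℂ (fderiv ℝ v z 1) e : ℂ)‖ ≤ B z := by
    intro z e he
    calc ‖(inner ℂ (fderiv ℝ v z 1) e : ℂ)‖ ≤ ‖fderiv ℝ v z 1‖ * ‖e‖ := norm_inner_le_norm _ _
      _ ≤ ‖fderiv ℝ v z‖ * M := by
          apply mul_le_mul ?_ he (norm_nonneg _) (norm_nonneg _)
          simpa using (fderiv ℝ v z).le_opNorm 1
  have hvxB' : ∀ z (e : E), ‖e‖ ≤ M → ‖(inner ℂ e (fderiv ℝ v z 1) : ℂ)‖ ≤ B z := by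
    intro z e he
    calc ‖(inner ℂ e (fderiv ℝ v z 1) : ℂ)‖ ≤ ‖e‖ * ‖fderiv ℝ v z 1‖ := norm_inner_le_norm _ _
      _ ≤ M * ‖fderiv ℝ v z‖ := by
          apply mul_le_mul he ?_ (norm_nonneg _) hM0
          simpa using (fderiv ℝ v z).le_opNorm 1
      _ = B z := mul_comm _ _
  -- slope facts
  have hgz : ∀ z : ℂ, HasDerivAt (fun t : ℝ => v (z + t • Complex.I)) (fderiv ℝ v z Complex.I) 0 := by
    intro z
    have h1 : HasDerivAt (fun t : ℝ => z + t • Complex.I) Complex.I 0 := by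
      simpa using ((hasDerivAt_id (0 : ℝ)).smul_const Complex.I).const_add z
    have := (hdv (z + (0:ℝ) • Complex.I)).hasFDerivAt.comp_hasDerivAt 0 h1
    simpa [Function.comp_def] using this
  have slope_plus : ∀ z : ℂ, Tendsto (fun h : ℝ => h⁻¹ • (v (z + h • Complex.I) - v z))
      (𝓝[≠] (0:ℝ)) (𝓝 (fderiv ℝ v z Complex.I)) := by
    intro z
    have := hasDerivAt_iff_tendsto_slope.mp (hgz z)
    apply this.congr'
    filter_upwards [self_mem_nhdsWithin] with h hh
    simp [slope, vsub_eq_sub]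
  have hneg : Tendsto (fun h : ℝ => -h) (𝓝[≠] (0:ℝ)) (𝓝[≠] (0:ℝ)) := by
    rw [tendsto_nhdsWithin_iff]
    constructor
    · simpa using (continuous_neg.tendsto (0:ℝ)).mono_left nhdsWithin_le_nhds
    · filter_upwards [self_mem_nhdsWithin] with x hx
      simpa using hx
  have slope_minus : ∀ z : ℂ, Tendsto (fun h : ℝ => h⁻¹ • (v z - v (z - h • Complex.I)))
      (𝓝[≠] (0:ℝ)) (𝓝 (fderiv ℝ v z Complex.I)) := by
    intro z
    have h1 := (slope_plus z).comp hneg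
    apply h1.congr'
    filter_upwards [self_mem_nhdsWithin] with h hh
    simp only [Function.comp, inv_neg, neg_smul, smul_sub, ← sub_eq_add_neg]
    abel
  -- Claim 1 : convergence of the forward difference quotients
  have t1 : Tendsto (fun h : ℝ => ∫ z : ℂ,
        (inner ℂ (fderiv ℝ v z 1) (h⁻¹ • (v (z + h • Complex.I) - v z)) : ℂ))
      (𝓝[≠] (0:ℝ)) (𝓝 (∫ z : ℂ, (inner ℂ (fderiv ℝ v z 1) (fderiv ℝ v z Complex.I) : ℂ))) := by
    apply tendsto_integral_filter_of_dominated_convergence B ?_ ?_ hBint ?_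
    · filter_upwards with h
      exact (cvx.inner (((cv.comp (continuous_id.add continuous_const)).sub cv).const_smul
        h⁻¹)).aestronglyMeasurable
    · filter_upwards [self_mem_nhdsWithin] with h hh
      apply ae_of_all
      intro z
      exact hvxB z _ (dq_bound h hh z (z + h • Complex.I) (by
        simp [norm_smul, Complex.norm_I]))
    · apply ae_of_all
      intro z
      exact Tendsto.inner tendsto_const_nhds (slope_plus z)
  -- Claim 3 : convergence of the backward difference quotients
  have t3 : Tendsto (fun h : ℝ => ∫ z : ℂ,
        (inner ℂ (h⁻¹ • (v z - v (z - h • Complex.I))) (fderiv ℝ v z 1) : ℂ))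
      (𝓝[≠] (0:ℝ)) (𝓝 (∫ z : ℂ, (inner ℂ (fderiv ℝ v z Complex.I) (fderiv ℝ v z 1) : ℂ))) := by
    apply tendsto_integral_filter_of_dominated_convergence B ?_ ?_ hBint ?_
    · filter_upwards with h
      exact ((((cv.sub (cv.comp (continuous_id.sub continuous_const)))).const_smul
        h⁻¹).inner cvx).aestronglyMeasurable
    · filter_upwards [self_mem_nhdsWithin] with h hh
      apply ae_of_all
      intro z
      exact hvxB' z _ (dq_bound h hh (z - h • Complex.I) z (by
        simp [norm_smul, Complex.norm_I]))
    · apply ae_of_all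
      intro z
      exact Tendsto.inner (slope_minus z) tendsto_const_nhds
  -- Claim 2 : the two families agree for nonzero h
  have t2 : ∀ h : ℝ, h ≠ 0 →
      (∫ z : ℂ, (inner ℂ (fderiv ℝ v z 1) (h⁻¹ • (v (z + h • Complex.I) - v z)) : ℂ))
        = ∫ z : ℂ, (inner ℂ (h⁻¹ • (v z - v (z - h • Complex.I))) (fderiv ℝ v z 1) : ℂ) := by
    intro h hh
    set c : ℂ := h • Complex.I with hc
    -- shifted function is C¹
    have hgshift : ContDiff ℝ 1 (fun z : ℂ => v (z + c)) :=
      hv.comp (contDiff_id.add contDiff_const)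
    have hfd : ∀ z : ℂ, fderiv ℝ (fun z : ℂ => v (z + c)) z = fderiv ℝ v (z + c) := by
      intro z
      have h1 : HasFDerivAt (fun z : ℂ => v (z + c)) (fderiv ℝ v (z + c)) z := by
        have := ((hdv (z + c)).hasFDerivAt).comp z ((hasFDerivAt_id z).add_const c)
        simpa [Function.comp_def] using this
      exact h1.fderiv
    -- integrability of the four integrands
    have int1 : Integrable (fun z : ℂ => (inner ℂ (fderiv ℝ v z 1) (v (z + c)) : ℂ)) volume := by
      apply (cvx.inner (cv.comp (continuous_id.add continuous_const))).integrable_of_hasCompactSupport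
      exact HasCompactSupport.intro hcsf (fun x hx => by
        simp [image_eq_zero_of_notMem_tsupport hx])
    have int2 : Integrable (fun z : ℂ => (inner ℂ (fderiv ℝ v z 1) (v z) : ℂ)) volume := by
      apply (cvx.inner cv).integrable_of_hasCompactSupport
      exact HasCompactSupport.intro hcsf (fun x hx => by
        simp [image_eq_zero_of_notMem_tsupport hx])
    have int3 : Integrable (fun z : ℂ => (inner ℂ (v z) (fderiv ℝ v z 1) : ℂ)) volume := by
      apply (cv.inner cvx).integrable_of_hasCompactSupport
      exact HasCompactSupport.intro hcsf (fun x hx => by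
        simp [image_eq_zero_of_notMem_tsupport hx])
    have int4 : Integrable (fun z : ℂ => (inner ℂ (v (z - c)) (fderiv ℝ v z 1) : ℂ)) volume := by
      apply ((cv.comp (continuous_id.sub continuous_const)).inner cvx).integrable_of_hasCompactSupport
      exact HasCompactSupport.intro hcsf (fun x hx => by
        simp [image_eq_zero_of_notMem_tsupport hx])
    -- IBP identity 1
    have ibp1 : ∫ z : ℂ, (inner ℂ (v z) (fderiv ℝ v (z + c) 1) : ℂ)
        = - ∫ z : ℂ, (inner ℂ (fderiv ℝ v z 1) (v (z + c)) : ℂ) := by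
      have := ibp_inner hv hgshift hcs 1
      simpa only [hfd] using this
    -- IBP identity 2
    have ibp2 : ∫ z : ℂ, (inner ℂ (v z) (fderiv ℝ v z 1) : ℂ)
        = - ∫ z : ℂ, (inner ℂ (fderiv ℝ v z 1) (v z) : ℂ) := ibp_inner hv hv hcs 1
    -- translation identity
    have trans1 : ∫ z : ℂ, (inner ℂ (v z) (fderiv ℝ v (z + c) 1) : ℂ)
        = ∫ z : ℂ, (inner ℂ (v (z - c)) (fderiv ℝ v z 1) : ℂ) := by
      rw [← integral_add_right_eq_self (fun z : ℂ => (inner ℂ (v (z - c)) (fderiv ℝ v z 1) : ℂ)) c]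
      simp
    -- put everything together
    have smul_out : ∀ (x y : E), (inner ℂ (h⁻¹ • x) y : ℂ) = h⁻¹ • (inner ℂ x y : ℂ) := by
      intro x y
      rw [← algebraMap_smul ℂ h⁻¹ x, inner_smul_real_left]
    have smul_out' : ∀ (x y : E), (inner ℂ x (h⁻¹ • y) : ℂ) = h⁻¹ • (inner ℂ x y : ℂ) := by
      intro x y
      rw [← algebraMap_smul ℂ h⁻¹ y, inner_smul_real_right]
    calc ∫ z : ℂ, (inner ℂ (fderiv ℝ v z 1) (h⁻¹ • (v (z + c) - v z)) : ℂ)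
        = ∫ z : ℂ, h⁻¹ • ((inner ℂ (fderiv ℝ v z 1) (v (z + c)) : ℂ)
            - (inner ℂ (fderiv ℝ v z 1) (v z) : ℂ)) := by
          apply integral_congr_ae; apply ae_of_all; intro z
          simp only [smul_out', inner_sub_right]
      _ = h⁻¹ • ((∫ z : ℂ, (inner ℂ (fderiv ℝ v z 1) (v (z + c)) : ℂ))
            - ∫ z : ℂ, (inner ℂ (fderiv ℝ v z 1) (v z) : ℂ)) := by
          rw [← integral_sub int1 int2, ← integral_smul]
      _ = h⁻¹ • ((∫ z : ℂ, (inner ℂ (v z) (fderiv ℝ v z 1) : ℂ))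
            - ∫ z : ℂ, (inner ℂ (v (z - c)) (fderiv ℝ v z 1) : ℂ)) := by
          congr 1
          have e1 : ∫ z : ℂ, (inner ℂ (fderiv ℝ v z 1) (v (z + c)) : ℂ)
              = - ∫ z : ℂ, (inner ℂ (v (z - c)) (fderiv ℝ v z 1) : ℂ) := by
            rw [← trans1, ibp1]; ring
          linear_combination e1 - ibp2
      _ = ∫ z : ℂ, (inner ℂ (h⁻¹ • (v z - v (z - c))) (fderiv ℝ v z 1) : ℂ) := by
          rw [← integral_sub int3 int4, ← integral_smul]
          apply integral_congr_ae; apply ae_of_all; intro z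
          simp only [smul_out, inner_sub_left]
  -- conclude by uniqueness of limits
  have t1' : Tendsto (fun h : ℝ => ∫ z : ℂ,
        (inner ℂ (h⁻¹ • (v z - v (z - h • Complex.I))) (fderiv ℝ v z 1) : ℂ))
      (𝓝[≠] (0:ℝ)) (𝓝 (∫ z : ℂ, (inner ℂ (fderiv ℝ v z 1) (fderiv ℝ v z Complex.I) : ℂ))) := by
    apply t1.congr'
    filter_upwards [self_mem_nhdsWithin] with h hh
    exact t2 h hh
  exact tendsto_nhds_unique t1' t3


lemma l2_bound {v : ℂ → E} (hv : ContDiff ℝ 1 v) (hcs : HasCompactSupport v)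
    (hsupp : tsupport v ⊆ ball (0:ℂ) 1) :
    ∫ z : ℂ, ‖v z‖ ^ 2 ≤ 16 * ∫ z : ℂ, ‖dbar v z‖ ^ 2 := by
  have hdv : Differentiable ℝ v := hv.differentiable one_ne_zero
  have cv : Continuous v := hv.continuous
  have cfd : Continuous (fderiv ℝ v) := hv.continuous_fderiv one_ne_zero
  have cvx : Continuous (fun z => fderiv ℝ v z 1) := cfd.clm_apply continuous_const
  have cvy : Continuous (fun z => fderiv ℝ v z Complex.I) := cfd.clm_apply continuous_const
  have hcsf : HasCompactSupport (fderiv ℝ v) := hcs.fderiv (𝕜 := ℝ)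
  have hfz : ∀ x, x ∉ tsupport v → v x = 0 := fun x hx => image_eq_zero_of_notMem_tsupport hx
  have hfz' : ∀ x, x ∉ tsupport v → fderiv ℝ v x = 0 := fun x hx =>
    Function.notMem_support.mp (fun h => hx (support_fderiv_subset ℝ h))
  set p : ℂ → E := fun z => (2⁻¹ : ℝ) • (fderiv ℝ v z 1 - Complex.I • fderiv ℝ v z Complex.I)
    with hp
  have cp : Continuous p := ((cvx.sub (cvy.const_smul Complex.I)).const_smul (2⁻¹:ℝ))
  have cq : Continuous (dbar v) := by
    unfold dbar
    exact ((cvx.add (cvy.const_smul Complex.I)).const_smul (2⁻¹:ℝ))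
  -- integrability facts
  have Iv2 : Integrable (fun z : ℂ => ‖v z‖ ^ 2) volume := by
    apply ((cv.norm).pow 2).integrable_of_hasCompactSupport
    exact HasCompactSupport.intro hcs (fun x hx => by simp [hfz x hx])
  have Ivx2 : Integrable (fun z : ℂ => ‖fderiv ℝ v z 1‖ ^ 2) volume := by
    apply ((cvx.norm).pow 2).integrable_of_hasCompactSupport
    exact HasCompactSupport.intro hcsf (fun x hx => by simp [image_eq_zero_of_notMem_tsupport hx])
  have Ip2 : Integrable (fun z : ℂ => ‖p z‖ ^ 2) volume := by
    apply ((cp.norm).pow 2).integrable_of_hasCompactSupport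
    exact HasCompactSupport.intro hcsf (fun x hx => by simp [hp, image_eq_zero_of_notMem_tsupport hx])
  have Iq2 : Integrable (fun z : ℂ => ‖dbar v z‖ ^ 2) volume := by
    apply ((cq.norm).pow 2).integrable_of_hasCompactSupport
    refine HasCompactSupport.intro hcsf (fun x hx => ?_)
    unfold dbar; simp [image_eq_zero_of_notMem_tsupport hx]
  -- PART 1 : Poincaré-type inequality  ∫‖v‖² ≤ 4 ∫‖vx‖²
  have part1 : ∫ z : ℂ, ‖v z‖ ^ 2 ≤ 4 * ∫ z : ℂ, ‖fderiv ℝ v z 1‖ ^ 2 := by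
    set g : ℂ → ℝ := fun z => ‖v z‖ ^ 2 with hgdef
    set D : ℂ → ℝ := fun z => ((inner ℂ (v z) (fderiv ℝ v z 1) : ℂ)
        + (inner ℂ (fderiv ℝ v z 1) (v z) : ℂ)).re with hD
    have cD : Continuous D := Complex.continuous_re.comp ((cv.inner cvx).add (cvx.inner cv))
    have hgD : ∀ z : ℂ, HasFDerivAt g
        (Complex.reCLM.comp ((fderivInnerCLM ℂ (v z, v z)).comp
          ((fderiv ℝ v z).prod (fderiv ℝ v z)))) z := by
      intro z
      have h1 := ((hdv z).hasFDerivAt.inner ℂ (hdv z).hasFDerivAt)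
      have h2 := (Complex.reCLM.hasFDerivAt).comp z h1
      apply h2.congr_of_eventuallyEq
      filter_upwards with w
      simp [hgdef, ← inner_self_eq_norm_sq (𝕜 := ℂ) (v w)]
    have hgd1 : ∀ z : ℂ, fderiv ℝ g z 1 = D z := by
      intro z
      rw [(hgD z).fderiv]
      simp [hD, fderivInnerCLM_apply]
    have hfd1 : ∀ z : ℂ, fderiv ℝ (fun w : ℂ => w.re) z 1 = 1 := by
      intro z
      have h2 : fderiv ℝ (fun w : ℂ => w.re) z = Complex.reCLM :=
        (Complex.reCLM.hasFDerivAt (x := z)).fderiv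
      rw [h2]
      simp
    have hfdiff : Differentiable ℝ (fun w : ℂ => w.re) := Complex.reCLM.differentiable
    have hgdiff : Differentiable ℝ g := fun z => ((hgD z).differentiableAt)
    have IfD : Integrable (fun z : ℂ => z.re * D z) volume := by
      apply (Complex.continuous_re.mul cD).integrable_of_hasCompactSupport
      exact HasCompactSupport.intro hcs (fun x hx => by simp [hD, hfz x hx])
    have Ig : Integrable g volume := Iv2
    have IDg : Integrable (fun z : ℂ => D z) volume := by
      apply cD.integrable_of_hasCompactSupport
      exact HasCompactSupport.intro hcs (fun x hx => by simp [hD, hfz x hx])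
    have ibpr := integral_mul_fderiv_eq_neg_fderiv_mul_of_integrable (𝕜 := ℝ) (μ := volume)
      (v := (1:ℂ)) (f := fun w : ℂ => w.re) (g := g)
      (Ig.congr (ae_of_all _ fun z => by simp only [hfd1, one_mul]))
      (IfD.congr (ae_of_all _ fun z => by simp only [hgd1]))
      (by
        apply (Complex.continuous_re.mul (cv.norm.pow 2)).integrable_of_hasCompactSupport
        exact HasCompactSupport.intro hcs (fun x hx => by simp [hgdef, hfz x hx]))
      (fun x _ => hfdiff x) (fun x _ => hgdiff x)
    simp only [hgd1, hfd1, one_mul] at ibpr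
    -- pointwise bound
    have pw : ∀ z : ℂ, -(z.re * D z) ≤ 2⁻¹ * ‖v z‖ ^ 2 + 2 * ‖fderiv ℝ v z 1‖ ^ 2 := by
      intro z
      by_cases hvz : v z = 0
      · have hD0 : D z = 0 := by simp [hD, hvz]
        rw [hD0, mul_zero, neg_zero]
        positivity
      · have hz : z ∈ ball (0:ℂ) 1 := hsupp (subset_tsupport v hvz)
        have hz1 : |z.re| ≤ 1 := by
          have := Complex.abs_re_le_norm z
          have h2 : ‖z‖ < 1 := by simpa [Complex.dist_eq] using mem_ball.mp hz
          linarith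
        have hDb : |D z| ≤ 2 * (‖v z‖ * ‖fderiv ℝ v z 1‖) := by
          have h1 : ‖(inner ℂ (v z) (fderiv ℝ v z 1) : ℂ)‖ ≤ ‖v z‖ * ‖fderiv ℝ v z 1‖ :=
            norm_inner_le_norm _ _
          have h2 : ‖(inner ℂ (fderiv ℝ v z 1) (v z) : ℂ)‖ ≤ ‖v z‖ * ‖fderiv ℝ v z 1‖ := by
            rw [mul_comm]; exact norm_inner_le_norm _ _
          calc |D z| ≤ ‖(inner ℂ (v z) (fderiv ℝ v z 1) : ℂ)
                + (inner ℂ (fderiv ℝ v z 1) (v z) : ℂ)‖ := by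
                exact Complex.abs_re_le_norm _
            _ ≤ _ := norm_add_le _ _
            _ ≤ 2 * (‖v z‖ * ‖fderiv ℝ v z 1‖) := by linarith
        have habs : |z.re * D z| ≤ 2 * (‖v z‖ * ‖fderiv ℝ v z 1‖) := by
          rw [abs_mul]
          calc |z.re| * |D z| ≤ 1 * (2 * (‖v z‖ * ‖fderiv ℝ v z 1‖)) :=
                mul_le_mul hz1 hDb (abs_nonneg _) one_pos.le
            _ = _ := one_mul _
        nlinarith [sq_nonneg (‖v z‖ - 2 * ‖fderiv ℝ v z 1‖), neg_abs_le (z.re * D z)]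
    have hIg : ∫ z : ℂ, g z = - ∫ z : ℂ, z.re * D z := by linarith [ibpr]
    have step : ∫ z : ℂ, g z ≤ ∫ z : ℂ, (2⁻¹ * ‖v z‖ ^ 2 + 2 * ‖fderiv ℝ v z 1‖ ^ 2) := by
      rw [hIg, ← integral_neg]
      exact integral_mono IfD.neg ((Iv2.const_mul _).add (Ivx2.const_mul _)) pw
    rw [integral_add (Iv2.const_mul _) (Ivx2.const_mul _), integral_const_mul,
      integral_const_mul] at step
    simp only [hgdef] at step
    linarith
  -- PART 2 : ∫‖vx‖² ≤ 2∫‖p‖² + 2∫‖dbar v‖²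
  have part2 : ∫ z : ℂ, ‖fderiv ℝ v z 1‖ ^ 2
      ≤ 2 * (∫ z : ℂ, ‖p z‖ ^ 2) + 2 * ∫ z : ℂ, ‖dbar v z‖ ^ 2 := by
    have pw : ∀ z : ℂ, ‖fderiv ℝ v z 1‖ ^ 2 ≤ 2 * ‖p z‖ ^ 2 + 2 * ‖dbar v z‖ ^ 2 := by
      intro z
      have hsum : fderiv ℝ v z 1 = p z + dbar v z := by
        rw [hp]; unfold dbar
        rw [← smul_add]
        have : fderiv ℝ v z 1 - Complex.I • fderiv ℝ v z Complex.I
            + (fderiv ℝ v z 1 + Complex.I • fderiv ℝ v z Complex.I)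
            = (2:ℝ) • fderiv ℝ v z 1 := by
          rw [two_smul]; abel
        rw [this, smul_smul]
        norm_num
      rw [hsum]
      nlinarith [norm_add_le (p z) (dbar v z), sq_nonneg (‖p z‖ - ‖dbar v z‖),
        norm_nonneg (p z), norm_nonneg (dbar v z), norm_nonneg (p z + dbar v z)]
    calc ∫ z : ℂ, ‖fderiv ℝ v z 1‖ ^ 2
        ≤ ∫ z : ℂ, (2 * ‖p z‖ ^ 2 + 2 * ‖dbar v z‖ ^ 2) :=
          integral_mono Ivx2 ((Ip2.const_mul _).add (Iq2.const_mul _)) pw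
      _ = _ := by
          rw [integral_add (Ip2.const_mul _) (Iq2.const_mul _), integral_const_mul,
            integral_const_mul]
  -- PART 3 : ∫‖p‖² = ∫‖dbar v‖²
  have part3 : ∫ z : ℂ, ‖p z‖ ^ 2 = ∫ z : ℂ, ‖dbar v z‖ ^ 2 := by
    have Tsymm := integral_inner_deriv_symm hv hcs
    have Iin : Integrable (fun z : ℂ =>
        (inner ℂ (fderiv ℝ v z 1) (fderiv ℝ v z Complex.I) : ℂ)) volume := by
      apply (cvx.inner cvy).integrable_of_hasCompactSupport
      exact HasCompactSupport.intro hcsf (fun x hx => by simp [image_eq_zero_of_notMem_tsupport hx])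
    have hTim : (∫ z : ℂ, (inner ℂ (fderiv ℝ v z 1) (fderiv ℝ v z Complex.I) : ℂ)).im = 0 := by
      have hconj : (starRingEnd ℂ) (∫ z : ℂ, (inner ℂ (fderiv ℝ v z 1) (fderiv ℝ v z Complex.I) : ℂ))
          = ∫ z : ℂ, (inner ℂ (fderiv ℝ v z 1) (fderiv ℝ v z Complex.I) : ℂ) := by
        rw [← integral_conj]
        rw [show (fun x : ℂ => (starRingEnd ℂ)
              ((inner ℂ (fderiv ℝ v x 1) (fderiv ℝ v x Complex.I) : ℂ)))
            = fun x : ℂ => (inner ℂ (fderiv ℝ v x Complex.I) (fderiv ℝ v x 1) : ℂ) from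
          funext fun x => inner_conj_symm _ _]
        exact Tsymm.symm
      exact (Complex.conj_eq_iff_im.mp hconj)
    have pwdiff : ∀ z : ℂ, ‖dbar v z‖ ^ 2 - ‖p z‖ ^ 2
        = -((inner ℂ (fderiv ℝ v z 1) (fderiv ℝ v z Complex.I) : ℂ)).im := by
      intro z
      set a := fderiv ℝ v z 1
      set c := Complex.I • fderiv ℝ v z Complex.I with hc
      have hq : ‖dbar v z‖ ^ 2 = 4⁻¹ * ‖a + c‖ ^ 2 := by
        show ‖(2⁻¹ : ℝ) • (a + c)‖ ^ 2 = 4⁻¹ * ‖a + c‖ ^ 2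
        rw [norm_smul, Real.norm_eq_abs, mul_pow,
          abs_of_pos (by norm_num : (0:ℝ) < 2⁻¹)]
        norm_num
      have hpn : ‖p z‖ ^ 2 = 4⁻¹ * ‖a - c‖ ^ 2 := by
        show ‖(2⁻¹ : ℝ) • (a - c)‖ ^ 2 = 4⁻¹ * ‖a - c‖ ^ 2
        rw [norm_smul, Real.norm_eq_abs, mul_pow,
          abs_of_pos (by norm_num : (0:ℝ) < 2⁻¹)]
        norm_num
      rw [hq, hpn, @norm_add_sq ℂ _ _ _ _ a c, @norm_sub_sq ℂ _ _ _ _ a c]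
      have hrec : (inner ℂ a c : ℂ).re = -((inner ℂ a (fderiv ℝ v z Complex.I) : ℂ)).im := by
        rw [hc, inner_smul_right]
        simp
      simp only [RCLike.re_to_complex] at *
      rw [hrec]
      ring
    have : ∫ z : ℂ, (‖dbar v z‖ ^ 2 - ‖p z‖ ^ 2) = 0 := by
      rw [integral_congr_ae (ae_of_all _ pwdiff)]
      rw [integral_neg]
      have him := integral_im (𝕜 := ℂ) (μ := volume) Iin
      simp only [RCLike.im_to_complex] at him
      rw [him, hTim, neg_zero]
    have hsub := integral_sub Iq2 Ip2
    rw [this] at hsub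
    linarith [hsub.symm]
  linarith

/-- there is `K > 0`, independent of `N`, such that for every `N ≥ 1`
and every `C¹` map `u : ℂ → ℂⁿ` compactly supported in `D \ {0}`,
`∫_D ‖∂u/∂z̄‖² |z|^{-2N} ≥ K ∫_D ‖u‖² |z|^{-2N}`. -/
theorem carleman_power_weights (n : ℕ) :
    ∃ K : ℝ, 0 < K ∧ ∀ (N : ℕ), 0 < N →
      ∀ (u : ℂ → EuclideanSpace ℂ (Fin n)),
        ContDiff ℝ 1 u → HasCompactSupport u →
        tsupport u ⊆ ball (0 : ℂ) 1 \ {0} →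
        K * (∫ z in ball (0 : ℂ) 1, ‖u z‖ ^ 2 / ‖z‖ ^ (2 * N))
          ≤ ∫ z in ball (0 : ℂ) 1, ‖dbar u z‖ ^ 2 / ‖z‖ ^ (2 * N) := by
  refine ⟨16⁻¹, by norm_num, ?_⟩
  intro N hN u hu hcsu hsupp
  have h0 : (0:ℂ) ∉ tsupport u := fun h => (hsupp h).2 rfl
  obtain ⟨ε, hε, hball⟩ : ∃ ε > 0, ball (0:ℂ) ε ⊆ (tsupport u)ᶜ :=
    Metric.isOpen_iff.mp (isOpen_compl_iff.mpr (isClosed_tsupport u)) 0 h0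
  set v : ℂ → EuclideanSpace ℂ (Fin n) := fun z => (z ^ N)⁻¹ • u z with hvdef
  have hu0 : ∀ z ∈ ball (0:ℂ) ε, u z = 0 := fun z hz =>
    image_eq_zero_of_notMem_tsupport (hball hz)
  have hv0 : ∀ z ∈ ball (0:ℂ) ε, v z = 0 := fun z hz => by simp [hvdef, hu0 z hz]
  -- v is C¹
  have hvC : ContDiff ℝ 1 v := by
    rw [contDiff_iff_contDiffAt]
    intro z
    by_cases hz : z = 0
    · subst hz
      have hev : v =ᶠ[𝓝 (0:ℂ)] (fun _ => (0 : EuclideanSpace ℂ (Fin n))) := by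
        filter_upwards [ball_mem_nhds (0:ℂ) hε] with w hw
        exact hv0 w hw
      exact (contDiffAt_const (c := (0 : EuclideanSpace ℂ (Fin n)))).congr_of_eventuallyEq hev
    · have h1 : ContDiffAt ℂ 1 (fun w : ℂ => (w ^ N)⁻¹) z :=
        ((contDiff_id.pow N).contDiffAt).inv (pow_ne_zero N hz)
      have h2 : ContDiffAt ℝ 1 (fun w : ℂ => (w ^ N)⁻¹) z := h1.restrict_scalars ℝ
      exact ((isBoundedBilinearMap_smul.contDiff).contDiffAt).comp z (h2.prodMk hu.contDiffAt)
  -- support facts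
  have hsupp_vu : tsupport v ⊆ tsupport u := by
    apply closure_mono
    intro x hx
    simp only [Function.mem_support] at hx ⊢
    intro hux
    exact hx (by simp [hvdef, hux])
  have hcsv : HasCompactSupport v :=
    HasCompactSupport.intro hcsu (fun x hx => by
      simp [hvdef, image_eq_zero_of_notMem_tsupport hx])
  have hsuppv : tsupport v ⊆ ball (0:ℂ) 1 :=
    hsupp_vu.trans (hsupp.trans Set.diff_subset)
  -- Wirtinger derivative identity
  have hdbar : ∀ z : ℂ, z ≠ 0 → dbar v z = (z ^ N)⁻¹ • dbar u z := by
    intro z hz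
    obtain ⟨d, hd⟩ : ∃ d : ℂ, HasDerivAt (fun w : ℂ => (w ^ N)⁻¹) d z :=
      ⟨_, (hasDerivAt_pow N z).inv (pow_ne_zero N hz)⟩
    have hR : HasFDerivAt (fun w : ℂ => (w ^ N)⁻¹)
        ((ContinuousLinearMap.smulRight (1 : ℂ →L[ℂ] ℂ) d).restrictScalars ℝ) z :=
      (hd.hasFDerivAt).restrictScalars ℝ
    have hu' : HasFDerivAt u (fderiv ℝ u z) z := (hu.differentiable one_ne_zero z).hasFDerivAt
    have hv' : HasFDerivAt v ((z ^ N)⁻¹ • fderiv ℝ u z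
        + (((ContinuousLinearMap.smulRight (1 : ℂ →L[ℂ] ℂ) d).restrictScalars ℝ)).smulRight (u z)) z :=
      hR.smul hu'
    have hfdv := hv'.fderiv
    show (2⁻¹ : ℝ) • (fderiv ℝ v z 1 + Complex.I • fderiv ℝ v z Complex.I) = _
    rw [hfdv]
    simp only [ContinuousLinearMap.add_apply, ContinuousLinearMap.coe_smul', Pi.smul_apply,
      ContinuousLinearMap.smulRight_apply, ContinuousLinearMap.coe_restrictScalars',
      ContinuousLinearMap.one_apply, one_smul]
    have e1 : Complex.I • ((Complex.I • d) • u z) = -(d • u z) := by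
      rw [smul_smul, smul_eq_mul, ← mul_assoc, Complex.I_mul_I, neg_one_mul, neg_smul]
    have e2 : Complex.I • ((z ^ N)⁻¹ • fderiv ℝ u z Complex.I)
        = (z ^ N)⁻¹ • (Complex.I • fderiv ℝ u z Complex.I) := smul_comm _ _ _
    rw [smul_add Complex.I, e1, e2]
    unfold dbar
    rw [smul_comm ((z ^ N)⁻¹) ((2⁻¹ : ℝ)), smul_add ((z ^ N)⁻¹)]
    congr 1
    abel
  -- norm identities
  have habs : ∀ z : ℂ, z ≠ 0 → ∀ w : EuclideanSpace ℂ (Fin n),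
      ‖(z ^ N)⁻¹ • w‖ ^ 2 = ‖w‖ ^ 2 / ‖z‖ ^ (2 * N) := by
    intro z hz w
    have hzn : ‖z‖ ≠ 0 := norm_ne_zero_iff.mpr hz
    rw [norm_smul, norm_inv, norm_pow, mul_pow, inv_pow]
    rw [show (‖z‖ ^ N) ^ 2 = ‖z‖ ^ (2 * N) from by rw [← pow_mul, mul_comm]]
    ring
  -- a.e. nonzero
  have meas0 : ∀ᵐ z : ℂ ∂volume, z ≠ 0 := by
    have h1 : {z : ℂ | ¬ z ≠ 0} = {0} := by ext w; simp
    rw [ae_iff, h1]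
    exact measure_singleton 0
  have e_v : ∫ z in ball (0:ℂ) 1, ‖u z‖ ^ 2 / ‖z‖ ^ (2 * N)
      = ∫ z in ball (0:ℂ) 1, ‖v z‖ ^ 2 := by
    apply setIntegral_congr_ae measurableSet_ball
    filter_upwards [meas0] with z hz _
    rw [hvdef]
    exact (habs z hz (u z)).symm
  have e_q : ∫ z in ball (0:ℂ) 1, ‖dbar u z‖ ^ 2 / ‖z‖ ^ (2 * N)
      = ∫ z in ball (0:ℂ) 1, ‖dbar v z‖ ^ 2 := by
    apply setIntegral_congr_ae measurableSet_ball
    filter_upwards [meas0] with z hz _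
    rw [hdbar z hz]
    exact (habs z hz (dbar u z)).symm
  have e_v2 : ∫ z in ball (0:ℂ) 1, ‖v z‖ ^ 2 = ∫ z : ℂ, ‖v z‖ ^ 2 := by
    apply setIntegral_eq_integral_of_forall_compl_eq_zero
    intro z hz
    have : v z = 0 := image_eq_zero_of_notMem_tsupport (fun h => hz (hsuppv h))
    simp [this]
  have e_q2 : ∫ z in ball (0:ℂ) 1, ‖dbar v z‖ ^ 2 = ∫ z : ℂ, ‖dbar v z‖ ^ 2 := by
    apply setIntegral_eq_integral_of_forall_compl_eq_zero
    intro z hz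
    have hfz' : fderiv ℝ v z = 0 := by
      apply Function.notMem_support.mp
      intro h
      exact hz (hsuppv (tsupport_fderiv_subset ℝ (subset_tsupport _ h)))
    unfold dbar
    simp [hfz']
  rw [e_v, e_q, e_v2, e_q2]
  have hmain := l2_bound hvC hcsv hsuppv
  linarith
end

section
/- Let u : D → ℂⁿ be a C¹ map satisfying ‖∂u/∂z̄(z)‖ ≤ C·‖u(z)‖ for all z ∈ D and some constant C > 0. Then there exists a measurable map A : D → (n×n complex matrices) with operator norm ‖A(z)‖ ≤ C for every z ∈ D, such that ∂u/∂z̄(z) + A(z)·u(z) = 0 for every z ∈ D. -/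
open Complex MeasureTheory Metric Filter Topology

lemma measurable_indicator_of_continuousOn {f : ℂ → ℂ} {s : Set ℂ}
    (hs : IsOpen s) (hf : ContinuousOn f s) : Measurable (s.indicator f) := by
  refine measurable_of_isOpen fun t ht => ?_
  by_cases h0 : (0:ℂ) ∈ t
  · have h : s.indicator f ⁻¹' t = (s ∩ f ⁻¹' t) ∪ sᶜ := by
      ext z; by_cases hz : z ∈ s <;> simp [Set.indicator_apply, hz, h0]
    rw [h]
    exact ((hf.isOpen_inter_preimage hs ht).measurableSet).union hs.measurableSet.compl
  · have h : s.indicator f ⁻¹' t = s ∩ f ⁻¹' t := by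
      ext z; by_cases hz : z ∈ s <;> simp [Set.indicator_apply, hz, h0]
    rw [h]; exact (hf.isOpen_inter_preimage hs ht).measurableSet

/-- if `u : D → ℂⁿ` is `C¹` and `‖∂u/∂z̄‖ ≤ C·‖u‖` on `D` for some
`C > 0`, then there is a measurable matrix-valued map `A : D → Mat_{n×n}(ℂ)` with
operator norm `‖A(z)‖ ≤ C` on `D`, such that `∂u/∂z̄(z) + A(z)·u(z) = 0` on `D`. -/
theorem matrix_division (n : ℕ)
    (u : ℂ → EuclideanSpace ℂ (Fin n))
    (hu : ContDiffOn ℝ 1 u (ball (0 : ℂ) 1))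
    (C : ℝ) (hC : 0 < C)
    (hineq : ∀ z ∈ ball (0 : ℂ) 1, ‖dbar u z‖ ≤ C * ‖u z‖) :
    ∃ A : ℂ → Matrix (Fin n) (Fin n) ℂ,
      Measurable (fun z i j => A z i j) ∧
      (∀ z ∈ ball (0 : ℂ) 1, ‖Matrix.toEuclideanCLM (𝕜 := ℂ) (A z)‖ ≤ C) ∧
      (∀ z ∈ ball (0 : ℂ) 1,
        dbar u z + Matrix.toEuclideanCLM (𝕜 := ℂ) (A z) (u z) = 0) := by
  classical
  set D : Set ℂ := ball (0 : ℂ) 1 with hD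
  set g : ℂ → Matrix (Fin n) (Fin n) ℂ :=
    fun z => Matrix.of fun i j =>
      -(dbar u z i) * (starRingEnd ℂ) (u z j) / ((‖u z‖ : ℂ) ^ 2) with hg
  -- continuity facts
  have hucont : ContinuousOn u D := hu.continuousOn
  have hfd : ContinuousOn (fderiv ℝ u) D :=
    hu.continuousOn_fderiv_of_isOpen isOpen_ball le_rfl
  have hdbar : ContinuousOn (dbar u) D := by
    have h1 : ContinuousOn (fun z => fderiv ℝ u z 1) D :=
      hfd.clm_apply continuousOn_const
    have h2 : ContinuousOn (fun z => fderiv ℝ u z Complex.I) D :=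
      hfd.clm_apply continuousOn_const
    exact (continuousOn_const.smul (h1.add (h2.const_smul Complex.I)))
  -- the open set where u ≠ 0
  set s : Set ℂ := D ∩ u ⁻¹' {0}ᶜ with hs
  have hsopen : IsOpen s := hucont.isOpen_inter_preimage isOpen_ball isOpen_compl_singleton
  have hsub : s ⊆ D := Set.inter_subset_left
  -- g vanishes when u z = 0
  have hg0 : ∀ z, u z = 0 → g z = 0 := by
    intro z hz
    ext i j
    simp [hg, hz]
  -- key computation of the action of g z
  have happ : ∀ z (v : EuclideanSpace ℂ (Fin n)),
      (Matrix.toEuclideanCLM (𝕜 := ℂ) (g z)) v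
        = (-(inner ℂ (u z) v : ℂ) / ((‖u z‖ : ℂ) ^ 2)) • dbar u z := by
    intro z v
    apply WithLp.ofLp_injective 2
    rw [Matrix.ofLp_toEuclideanCLM, WithLp.ofLp_smul]
    funext i
    simp only [Matrix.mulVec, dotProduct, Matrix.of_apply, Pi.smul_apply,
      smul_eq_mul, hg]
    have hinner : (inner ℂ (u z) v : ℂ) = ∑ j, (starRingEnd ℂ) (u z j) * v j := by
      simp [PiLp.inner_apply, RCLike.inner_apply, mul_comm]
    rw [hinner]
    rw [div_mul_eq_mul_div, neg_mul, Finset.sum_mul, ← Finset.sum_neg_distrib,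
      Finset.sum_div]
    exact Finset.sum_congr rfl fun j _ => by ring
  -- the matrix A
  refine ⟨fun z => D.indicator g z, ?_, ?_, ?_⟩
  · -- measurability
    refine measurable_pi_lambda _ fun i => measurable_pi_lambda _ fun j => ?_
    have key : (fun z => D.indicator g z i j) = s.indicator (fun z => g z i j) := by
      ext z
      by_cases hzD : z ∈ D
      · by_cases hz0 : u z = 0
        · have hns : z ∉ s := by simp [hs, hz0, Set.mem_inter_iff]
          simp [Set.indicator_apply, hzD, hns, hg0 z hz0]
        · have hzs : z ∈ s := ⟨hzD, hz0⟩
          simp [Set.indicator_apply, hzD, hzs]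
      · have hns : z ∉ s := fun h => hzD (hsub h)
        simp [Set.indicator_apply, hzD, hns]
    rw [key]
    refine measurable_indicator_of_continuousOn hsopen ?_
    have hdbari : ContinuousOn (fun z => dbar u z i) s :=
      ((EuclideanSpace.proj i : EuclideanSpace ℂ (Fin n) →L[ℂ] ℂ).continuous.comp_continuousOn
        (hdbar.mono hsub))
    have huj : ContinuousOn (fun z => (starRingEnd ℂ) (u z j)) s :=
      (Complex.continuous_conj.comp_continuousOn
        ((EuclideanSpace.proj j : EuclideanSpace ℂ (Fin n) →L[ℂ] ℂ).continuous.comp_continuousOn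
          (hucont.mono hsub)))
    have hden : ContinuousOn (fun z => ((‖u z‖ : ℂ) ^ 2)) s :=
      ((Complex.continuous_ofReal.comp_continuousOn
        (hucont.mono hsub).norm).pow 2)
    refine ContinuousOn.div ((hdbari.neg.mul huj)) hden ?_
    intro z hz
    have hz0 : u z ≠ 0 := hz.2
    simp [pow_eq_zero_iff, norm_eq_zero, hz0]
  · -- norm bound
    intro z hzD
    by_cases hz0 : u z = 0
    · simp only [Set.indicator_of_mem hzD, hg0 z hz0, map_zero, norm_zero]
      exact hC.le
    · have hun : (0:ℝ) < ‖u z‖ := norm_pos_iff.mpr hz0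
      simp only [Set.indicator_of_mem hzD]
      refine ContinuousLinearMap.opNorm_le_bound _ hC.le fun v => ?_
      rw [happ z v, norm_smul]
      have h2 : ‖((‖u z‖ : ℂ) ^ 2)‖ = ‖u z‖ ^ 2 := by
        rw [norm_pow, Complex.norm_real, Real.norm_eq_abs,
          _root_.abs_of_nonneg (norm_nonneg _)]
      have h1 : ‖(-(inner ℂ (u z) v : ℂ) / ((‖u z‖ : ℂ) ^ 2))‖ ≤ ‖v‖ / ‖u z‖ := by
        rw [norm_div, norm_neg, h2]
        calc ‖(inner ℂ (u z) v : ℂ)‖ / ‖u z‖ ^ 2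
            ≤ (‖u z‖ * ‖v‖) / ‖u z‖ ^ 2 := by
              gcongr
              exact norm_inner_le_norm _ _
          _ = ‖v‖ / ‖u z‖ := by field_simp
      calc ‖(-(inner ℂ (u z) v : ℂ) / ((‖u z‖ : ℂ) ^ 2))‖ * ‖dbar u z‖
          ≤ (‖v‖ / ‖u z‖) * (C * ‖u z‖) :=
            mul_le_mul h1 (hineq z hzD) (norm_nonneg _) (by positivity)
        _ = C * ‖v‖ := by field_simp
  · -- the equation
    intro z hzD
    by_cases hz0 : u z = 0
    · have hle : ‖dbar u z‖ ≤ 0 := by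
        have := hineq z hzD; simpa [hz0] using this
      have hd0 : dbar u z = 0 := norm_le_zero_iff.mp hle
      simp only [Set.indicator_of_mem hzD, hg0 z hz0, map_zero, hd0]
      simp
    · have hN : ((‖u z‖ : ℂ) ^ 2) ≠ 0 := by
        simp [pow_eq_zero_iff, norm_eq_zero, hz0]
      simp only [Set.indicator_of_mem hzD]
      have hself : (inner ℂ (u z) (u z) : ℂ) = ((‖u z‖ : ℂ) ^ 2) := by
        rw [inner_self_eq_norm_sq_to_K]; norm_cast
      rw [happ z (u z), hself, neg_div, div_self hN, neg_smul, one_smul, add_neg_cancel]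
end
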